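/- arXiv:1811.03400 — 8 statements merged into one kernel-verified Lean document; each statement's English description precedes it below -/
import Mathlib

section
/- Let x > 1 be a real number and k an odd positive integer. Then (2^k x^{floor(k/2)})/(k+1) ≤ sum_{i=0}^{floor(k/2)} binom(k,i) x^i ≤ 2^k x^{floor(k/2)}. -/
theorem lower_half_sum_bounds (x : ℝ) (hx : 1 < x) (k : ℕ) (hk : Odd k) (hk0 : 0 < k) :
    (2:ℝ)^k * x^(k / 2) / (k + 1) ≤ ∑ i ∈ Finset.range (k / 2 + 1), (k.choose i : ℝ) * x^i ∧
    ∑ i ∈ Finset.range (k / 2 + 1), (k.choose i : ℝ) * x^i ≤ (2:ℝ)^k * x^(k / 2) := by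
  obtain ⟨m, hm⟩ := hk
  have hx0 : (0:ℝ) < x := lt_trans one_pos hx
  have hkm : k / 2 = m := by omega
  have hxm : (0:ℝ) < x ^ m := pow_pos hx0 m
  subst hm
  rw [hkm]
  constructor
  · -- lower bound
    have h1 : (2:ℕ)^(2*m+1) ≤ (2*m+1+1) * (2*m+1).choose m := by
      calc (2:ℕ)^(2*m+1) = ∑ i ∈ Finset.range (2*m+1+1), (2*m+1).choose i :=
            (Nat.sum_range_choose (2*m+1)).symm
        _ ≤ ∑ _i ∈ Finset.range (2*m+1+1), (2*m+1).choose ((2*m+1)/2) :=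
            Finset.sum_le_sum fun i _ => Nat.choose_le_middle i (2*m+1)
        _ = (2*m+1+1) * (2*m+1).choose m := by
            rw [Finset.sum_const, Finset.card_range, smul_eq_mul, hkm]
    have h1' : (2:ℝ)^(2*m+1) ≤ ((2*m:ℝ)+1+1) * ((2*m+1).choose m : ℝ) := by
      exact_mod_cast h1
    have h2 : ((2*m+1).choose m : ℝ) * x ^ m ≤
        ∑ i ∈ Finset.range (m + 1), ((2*m+1).choose i : ℝ) * x ^ i := by
      apply Finset.single_le_sum (f := fun i => ((2*m+1).choose i : ℝ) * x ^ i)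
      · intro i _
        positivity
      · simp
    have hk1 : (0:ℝ) < (2*m:ℝ)+1+1 := by positivity
    rw [div_le_iff₀ (by positivity)]
    push_cast at h2 ⊢
    nlinarith [mul_le_mul_of_nonneg_right h1' hxm.le]
  · -- upper bound
    calc ∑ i ∈ Finset.range (m + 1), ((2*m+1).choose i : ℝ) * x ^ i
        ≤ ∑ i ∈ Finset.range (m + 1), ((2*m+1).choose i : ℝ) * x ^ m := by
          apply Finset.sum_le_sum
          intro i hi
          have : x ^ i ≤ x ^ m :=
            pow_le_pow_right₀ hx.le (by simpa using Nat.lt_succ_iff.mp (Finset.mem_range.mp hi))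
          exact mul_le_mul_of_nonneg_left this (by positivity)
      _ = (4:ℝ)^m * x ^ m := by
          rw [← Finset.sum_mul]
          congr 1
          exact_mod_cast congrArg (Nat.cast (R := ℝ)) (Nat.sum_range_choose_halfway m)
      _ ≤ (2:ℝ)^(2*m+1) * x ^ m := by
          have : (4:ℝ)^m ≤ (2:ℝ)^(2*m+1) := by
            rw [show (4:ℝ) = 2^2 by norm_num, ← pow_mul]
            exact pow_le_pow_right₀ one_le_two (by omega)
          exact mul_le_mul_of_nonneg_right this hxm.le
end

section
/- Let x > 1 be a real number and k an odd positive integer. Then the ratio (sum_{i=ceil(k/2)}^{k} binom(k,i) x^i) / (sum_{i=0}^{floor(k/2)} binom(k,i) x^i) is at least (1+x)^k/(2^k x^{floor(k/2)}) - 1. -/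
theorem split_binomial_ratio_lower (x : ℝ) (hx : 1 < x) (k : ℕ) (hk : Odd k) (hk0 : 0 < k) :
    (1 + x)^k / ((2:ℝ)^k * x^(k / 2)) - 1 ≤
      (∑ i ∈ Finset.Icc ((k + 1) / 2) k, (k.choose i : ℝ) * x^i) /
      (∑ i ∈ Finset.range (k / 2 + 1), (k.choose i : ℝ) * x^i) := by
  obtain ⟨m, hm⟩ := hk
  have hx0 : (0:ℝ) < x := by linarith
  set S := ∑ i ∈ Finset.range (k / 2 + 1), (k.choose i : ℝ) * x^i with hS
  set T := ∑ i ∈ Finset.Icc ((k + 1) / 2) k, (k.choose i : ℝ) * x^i with hT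
  have hSpos : 0 < S := by
    apply Finset.sum_pos
    · intro i hi
      have hik : i ≤ k := by
        have := Finset.mem_range.mp hi
        omega
      have : 0 < k.choose i := Nat.choose_pos hik
      positivity
    · exact ⟨0, by simp⟩
  have hhalf : (k + 1) / 2 = k / 2 + 1 := by omega
  have hsplit : (1 + x)^k = S + T := by
    have h1 : (1 + x)^k = ∑ i ∈ Finset.range (k + 1), (k.choose i : ℝ) * x^i := by
      rw [add_comm, add_pow]
      simp [mul_comm]
    rw [h1, hS, hT, hhalf]
    rw [Finset.range_eq_Ico, ← Finset.Ico_add_one_right_eq_Icc,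
      ← Finset.sum_Ico_consecutive (fun i => (k.choose i : ℝ) * x^i)
        (Nat.zero_le (k / 2 + 1)) (by omega : k / 2 + 1 ≤ k + 1), Finset.range_eq_Ico]
  have hSle : S ≤ (2:ℝ)^k * x^(k/2) := by
    have h1 : S ≤ ∑ i ∈ Finset.range (k / 2 + 1), (k.choose i : ℝ) * x^(k/2) := by
      apply Finset.sum_le_sum
      intro i hi
      have : x ^ i ≤ x ^ (k/2) :=
        pow_le_pow_right₀ hx.le (by have := Finset.mem_range.mp hi; omega)
      have h2 : (0:ℝ) ≤ (k.choose i : ℝ) := by positivity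
      nlinarith
    have h2 : ∑ i ∈ Finset.range (k / 2 + 1), (k.choose i : ℝ) * x^(k/2)
        = (∑ i ∈ Finset.range (k / 2 + 1), (k.choose i : ℝ)) * x^(k/2) := by
      rw [Finset.sum_mul]
    have h3 : (∑ i ∈ Finset.range (k / 2 + 1), (k.choose i : ℝ)) ≤ (2:ℝ)^k := by
      have hsub : ∑ i ∈ Finset.range (k / 2 + 1), k.choose i
          ≤ ∑ i ∈ Finset.range (k + 1), k.choose i := by
        apply Finset.sum_le_sum_of_subset
        apply Finset.range_subset_range.mpr
        omega
      rw [Nat.sum_range_choose] at hsub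
      calc (∑ i ∈ Finset.range (k / 2 + 1), (k.choose i : ℝ))
          = ((∑ i ∈ Finset.range (k / 2 + 1), k.choose i : ℕ) : ℝ) := by push_cast; ring
        _ ≤ ((2^k : ℕ) : ℝ) := by exact_mod_cast hsub
        _ = (2:ℝ)^k := by push_cast; ring
    calc S ≤ _ := h1
      _ = _ := h2
      _ ≤ (2:ℝ)^k * x^(k/2) := by
        apply mul_le_mul_of_nonneg_right h3 (by positivity)
  have hTeq : T = (1 + x)^k - S := by linarith
  rw [hTeq, sub_div, div_self hSpos.ne']
  have : (1 + x)^k / ((2:ℝ)^k * x^(k/2)) ≤ (1 + x)^k / S := by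
    gcongr
  linarith
end

section
/- Let x > 1 be a real number and k an odd positive integer. Then the ratio (sum_{i=ceil(k/2)}^{k} binom(k,i) x^i) / (sum_{i=0}^{floor(k/2)} binom(k,i) x^i) is at most (k+1)(1+x)^k/(2^k x^{floor(k/2)}). -/
theorem split_binomial_ratio_upper (x : ℝ) (hx : 1 < x) (k : ℕ) (hk : Odd k) (hk0 : 0 < k) :
    (∑ i ∈ Finset.Icc ((k + 1) / 2) k, (k.choose i : ℝ) * x^i) /
      (∑ i ∈ Finset.range (k / 2 + 1), (k.choose i : ℝ) * x^i) ≤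
    (k + 1) * (1 + x)^k / ((2:ℝ)^k * x^(k / 2)) := by
  have hx0 : (0:ℝ) < x := lt_trans one_pos hx
  set m := k / 2 with hm
  -- (1+x)^k as full binomial sum
  have hpow : (1 + x)^k = ∑ i ∈ Finset.range (k+1), (k.choose i : ℝ) * x^i := by
    rw [add_comm, add_pow]
    simp [mul_comm]
  -- numerator bound
  have hnum : (∑ i ∈ Finset.Icc ((k + 1) / 2) k, (k.choose i : ℝ) * x^i) ≤ (1 + x)^k := by
    rw [hpow]
    apply Finset.sum_le_sum_of_subset_of_nonneg
    · intro i hi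
      simp only [Finset.mem_Icc] at hi
      exact Finset.mem_range.mpr (Nat.lt_succ_of_le hi.2)
    · intro i _ _
      positivity
  -- central binomial lower bound: 2^k ≤ (k+1) * choose k m
  have hC : (2:ℝ)^k ≤ (k+1) * (k.choose m : ℝ) := by
    have h1 : 2^k ≤ (k+1) * k.choose m := by
      calc 2^k = ∑ i ∈ Finset.range (k+1), k.choose i := (Nat.sum_range_choose k).symm
        _ ≤ ∑ _i ∈ Finset.range (k+1), k.choose m := by
            apply Finset.sum_le_sum
            intro i _
            exact Nat.choose_le_middle i k
        _ = (k+1) * k.choose m := by simp [Finset.sum_const, Finset.card_range, mul_comm]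
    calc (2:ℝ)^k = ((2^k : ℕ) : ℝ) := by push_cast; ring
      _ ≤ (((k+1) * k.choose m : ℕ) : ℝ) := by exact_mod_cast h1
      _ = (k+1) * (k.choose m : ℝ) := by push_cast; ring
  -- denominator bound
  have hden1 : (k.choose m : ℝ) * x^m ≤ ∑ i ∈ Finset.range (m + 1), (k.choose i : ℝ) * x^i := by
    apply Finset.single_le_sum (f := fun i => (k.choose i : ℝ) * x^i)
    · intro i _; positivity
    · exact Finset.self_mem_range_succ m
  have hden2 : ((2:ℝ)^k * x^m) / (k+1) ≤ ∑ i ∈ Finset.range (m + 1), (k.choose i : ℝ) * x^i := by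
    refine le_trans ?_ hden1
    rw [div_le_iff₀ (by positivity)]
    calc (2:ℝ)^k * x^m ≤ ((k+1) * (k.choose m : ℝ)) * x^m := by
          apply mul_le_mul_of_nonneg_right hC (by positivity)
      _ = (k.choose m : ℝ) * x^m * (k+1) := by ring
  have hBpos : (0:ℝ) < ((2:ℝ)^k * x^m) / (k+1) := by positivity
  have key : (∑ i ∈ Finset.Icc ((k + 1) / 2) k, (k.choose i : ℝ) * x^i) /
      (∑ i ∈ Finset.range (m + 1), (k.choose i : ℝ) * x^i) ≤
      (1 + x)^k / (((2:ℝ)^k * x^m) / (k+1)) :=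
    div_le_div₀ (by positivity) hnum hBpos hden2
  refine key.trans_eq ?_
  rw [div_div_eq_mul_div]
  ring
end

section
/- Let x > 1 be a real number. Then the limit, taken along odd positive integers k tending to infinity, of the k-th root of the ratio (sum_{i=ceil(k/2)}^{k} binom(k,i) x^i) / (sum_{i=0}^{floor(k/2)} binom(k,i) x^i) equals (1+x)/(2√x), and this limit is strictly greater than 1. -/
open Filter Real Finset

theorem split_binomial_sum_limit (x : ℝ) (hx : 1 < x) :
    Filter.Tendsto
      (fun n : ℕ =>
        ((∑ i ∈ Finset.Icc ((2 * n + 1 + 1) / 2) (2 * n + 1), ((2 * n + 1).choose i : ℝ) * x^i) /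
         (∑ i ∈ Finset.range ((2 * n + 1) / 2 + 1), ((2 * n + 1).choose i : ℝ) * x^i))
          ^ ((1 : ℝ) / ((2 * n + 1 : ℕ) : ℝ)))
      Filter.atTop (nhds ((1 + x) / (2 * Real.sqrt x))) ∧
    1 < (1 + x) / (2 * Real.sqrt x) := by
  have hx0 : (0:ℝ) < x := by linarith
  have hx1 : (1:ℝ) ≤ x := hx.le
  have hsq0 : 0 < Real.sqrt x := Real.sqrt_pos.2 hx0
  have hsq1 : 1 < Real.sqrt x := by
    nlinarith [Real.sq_sqrt hx0.le, Real.sqrt_nonneg x]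
  have hidx1 : ∀ n : ℕ, (2 * n + 1 + 1) / 2 = n + 1 := fun n => by omega
  have hidx2 : ∀ n : ℕ, (2 * n + 1) / 2 = n := fun n => by omega
  -- abbreviations
  set Slo : ℕ → ℝ := fun n => ∑ i ∈ Finset.range (n + 1), ((2 * n + 1).choose i : ℝ) * x ^ i
    with hSlo_def
  set Shi : ℕ → ℝ := fun n => ∑ i ∈ Finset.Icc (n + 1) (2 * n + 1),
    ((2 * n + 1).choose i : ℝ) * x ^ i with hShi_def
  have hCpos : ∀ n : ℕ, 0 < (((2 * n + 1).choose n : ℕ) : ℝ) := fun n => by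
    exact_mod_cast Nat.choose_pos (by omega)
  have hC_lo : ∀ n : ℕ, (((2 * n + 1).choose n : ℕ) : ℝ) * x ^ n ≤ Slo n := fun n => by
    apply Finset.single_le_sum (f := fun i => ((2 * n + 1).choose i : ℝ) * x ^ i)
    · intro i _; positivity
    · exact Finset.self_mem_range_succ n
  have hSlo_pos : ∀ n : ℕ, 0 < Slo n := fun n =>
    lt_of_lt_of_le (mul_pos (hCpos n) (pow_pos hx0 n)) (hC_lo n)
  have hle : ∀ n : ℕ, Slo n ≤ Shi n := by
    intro n
    have hrefl : Slo n = ∑ i ∈ Finset.range (n + 1),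
        ((2 * n + 1).choose (n - i) : ℝ) * x ^ (n - i) := by
      rw [hSlo_def]
      exact (Finset.sum_range_reflect (fun i => ((2 * n + 1).choose i : ℝ) * x ^ i) (n + 1)).symm
    have hhi : Shi n = ∑ i ∈ Finset.range (n + 1),
        ((2 * n + 1).choose (n + 1 + i) : ℝ) * x ^ (n + 1 + i) := by
      simp only [hShi_def]
      rw [← Finset.Ico_add_one_right_eq_Icc, Finset.sum_Ico_eq_sum_range,
        show 2 * n + 1 + 1 - (n + 1) = n + 1 from by omega]
    rw [hrefl, hhi]
    apply Finset.sum_le_sum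
    intro i hi
    have hi' : i ≤ n := by simpa [Nat.lt_succ_iff] using hi
    have hch : (2 * n + 1).choose (n - i) = (2 * n + 1).choose (n + 1 + i) := by
      rw [← Nat.choose_symm (show n + 1 + i ≤ 2 * n + 1 by omega),
        show 2 * n + 1 - (n + 1 + i) = n - i from by omega]
    rw [hch]
    exact mul_le_mul_of_nonneg_left (pow_le_pow_right₀ hx1 (by omega)) (by positivity)
  have hShi_pos : ∀ n : ℕ, 0 < Shi n := fun n => lt_of_lt_of_le (hSlo_pos n) (hle n)
  have hsum : ∀ n : ℕ, Slo n + Shi n = (1 + x) ^ (2 * n + 1) := by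
    intro n
    have hsplit : Finset.range (2 * n + 2) =
        Finset.range (n + 1) ∪ Finset.Icc (n + 1) (2 * n + 1) := by
      ext i
      simp only [Finset.mem_range, Finset.mem_union, Finset.mem_Icc]
      omega
    have hdisj : Disjoint (Finset.range (n + 1)) (Finset.Icc (n + 1) (2 * n + 1)) := by
      rw [Finset.disjoint_left]
      intro i hi hj
      simp only [Finset.mem_range] at hi
      simp only [Finset.mem_Icc] at hj
      omega
    rw [show (1 + x) = (x + 1) by ring, add_pow,
      show 2 * n + 1 + 1 = 2 * n + 2 from rfl, hsplit, Finset.sum_union hdisj]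
    congr 1 <;> refine Finset.sum_congr rfl fun i _ => by rw [one_pow]; ring
  have hmid : ∀ n i : ℕ, (2 * n + 1).choose i ≤ (2 * n + 1).choose n := by
    intro n i
    have := Nat.choose_le_middle i (2 * n + 1)
    rwa [hidx2 n] at this
  have hC_hi : ∀ n : ℕ, Slo n ≤ ((n : ℝ) + 1) * ((((2 * n + 1).choose n : ℕ) : ℝ) * x ^ n) := by
    intro n
    have h := Finset.sum_le_card_nsmul (Finset.range (n + 1))
      (fun i => ((2 * n + 1).choose i : ℝ) * x ^ i) ((((2 * n + 1).choose n : ℕ) : ℝ) * x ^ n)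
      (fun i hi => by
        have hi' : i ≤ n := by simpa [Nat.lt_succ_iff] using hi
        exact mul_le_mul (by exact_mod_cast hmid n i) (pow_le_pow_right₀ hx1 hi')
          (by positivity) (by positivity))
    rw [Finset.card_range, nsmul_eq_mul] at h
    convert h using 2
    · rfl
    push_cast
    ring
  have h2C : ∀ n : ℕ, (2:ℝ) ^ (2 * n + 1) ≤ (2 * (n:ℝ) + 2) * (((2 * n + 1).choose n : ℕ) : ℝ) := by
    intro n
    have hN : 2 ^ (2 * n + 1) ≤ (2 * n + 2) * (2 * n + 1).choose n := by
      have h := Finset.sum_le_card_nsmul (Finset.range (2 * n + 2))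
        (fun i => (2 * n + 1).choose i) ((2 * n + 1).choose n) (fun i _ => hmid n i)
      rw [Finset.card_range, smul_eq_mul] at h
      calc 2 ^ (2 * n + 1) = ∑ i ∈ Finset.range (2 * n + 1 + 1), (2 * n + 1).choose i :=
            (Nat.sum_range_choose (2 * n + 1)).symm
        _ ≤ (2 * n + 2) * (2 * n + 1).choose n := h
    exact_mod_cast hN
  have hC2 : ∀ n : ℕ, (((2 * n + 1).choose n : ℕ) : ℝ) ≤ 2 ^ (2 * n + 1) := by
    intro n
    have hN : (2 * n + 1).choose n ≤ 2 ^ (2 * n + 1) := by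
      calc (2 * n + 1).choose n
          ≤ ∑ i ∈ Finset.range (2 * n + 1 + 1), (2 * n + 1).choose i :=
            Finset.single_le_sum (fun i _ => Nat.zero_le _)
              (Finset.mem_range.2 (by omega))
        _ = 2 ^ (2 * n + 1) := Nat.sum_range_choose (2 * n + 1)
    exact_mod_cast hN
  constructor
  · -- the limit
    have hT : Real.exp (Real.log (1 + x) - Real.log 2 - Real.log x / 2)
        = (1 + x) / (2 * Real.sqrt x) := by
      rw [Real.exp_sub, Real.exp_sub, Real.exp_log (by linarith : (0:ℝ) < 1 + x),
        Real.exp_log (by norm_num : (0:ℝ) < 2)]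
      have hsq : Real.sqrt x = Real.exp (Real.log x / 2) := by
        rw [Real.sqrt_eq_rpow, Real.rpow_def_of_pos hx0]
        ring_nf
      rw [hsq, div_div]
    -- squeeze functions
    set glo : ℕ → ℝ := fun n => Real.log (1 + x) - Real.log 2
      - ((n : ℝ) / (2 * (n:ℝ) + 1)) * Real.log x
      - (Real.log 2 + Real.log ((n:ℝ) + 1)) / (2 * (n:ℝ) + 1) with hglo_def
    set ghi : ℕ → ℝ := fun n => Real.log (1 + x) - Real.log 2
      - ((n : ℝ) / (2 * (n:ℝ) + 1)) * Real.log x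
      + Real.log (2 * (n:ℝ) + 2) / (2 * (n:ℝ) + 1) with hghi_def
    have hKpos : ∀ n : ℕ, (0:ℝ) < 2 * (n:ℝ) + 1 := fun n => by positivity
    have hatTop : Tendsto (fun n : ℕ => 2 * (n:ℝ) + 1) atTop atTop := by
      apply Filter.tendsto_atTop_add_const_right
      exact (tendsto_natCast_atTop_atTop).const_mul_atTop (by norm_num)
    have hinv : Tendsto (fun n : ℕ => 1 / (2 * (n:ℝ) + 1)) atTop (nhds 0) := by
      simpa [one_div, Pi.inv_def] using hatTop.inv_tendsto_atTop
    have t1 : Tendsto (fun n : ℕ => (n:ℝ) / (2 * (n:ℝ) + 1)) atTop (nhds (1/2)) := by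
      have heq : ∀ n : ℕ, (n:ℝ) / (2 * (n:ℝ) + 1)
          = 1/2 - (1/2) * (1 / (2 * (n:ℝ) + 1)) := by
        intro n
        have h := (hKpos n).ne'
        field_simp
        ring
      have : Tendsto (fun n : ℕ => 1/2 - (1/2) * (1 / (2 * (n:ℝ) + 1))) atTop
          (nhds (1/2 - (1/2) * 0)) := (tendsto_const_nhds.sub (hinv.const_mul _))
      simp only [mul_zero, sub_zero] at this
      exact Tendsto.congr (fun n => (heq n).symm) this
    have t2 : Tendsto (fun n : ℕ => Real.log ((n:ℝ) + 1) / (2 * (n:ℝ) + 1)) atTop (nhds 0) := by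
      have hbase := Real.tendsto_pow_log_div_mul_add_atTop 2 (-1) 1 (by norm_num)
      have hcomp : Tendsto (fun n : ℕ => (n:ℝ) + 1) atTop atTop :=
        tendsto_atTop_add_const_right _ _ tendsto_natCast_atTop_atTop
      have := hbase.comp hcomp
      refine this.congr fun n => ?_
      simp only [Function.comp_apply, pow_one]
      ring_nf
    have t3 : Tendsto (fun n : ℕ => Real.log (2 * (n:ℝ) + 2) / (2 * (n:ℝ) + 1)) atTop
        (nhds 0) := by
      have hbase := Real.tendsto_pow_log_div_mul_add_atTop 1 (-1) 1 (by norm_num)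
      have hcomp : Tendsto (fun n : ℕ => 2 * (n:ℝ) + 2) atTop atTop := by
        apply Filter.tendsto_atTop_add_const_right
        exact (tendsto_natCast_atTop_atTop).const_mul_atTop (by norm_num)
      have := hbase.comp hcomp
      refine this.congr fun n => ?_
      simp only [Function.comp_apply, pow_one]
      ring_nf
    have t4 : Tendsto (fun n : ℕ => Real.log 2 / (2 * (n:ℝ) + 1)) atTop (nhds 0) := by
      simpa [div_eq_mul_inv] using hinv.const_mul (Real.log 2)
    have hglo_lim : Tendsto glo atTop
        (nhds (Real.log (1 + x) - Real.log 2 - Real.log x / 2)) := by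
      have : Tendsto (fun n : ℕ => Real.log (1 + x) - Real.log 2
          - ((n : ℝ) / (2 * (n:ℝ) + 1)) * Real.log x
          - (Real.log 2 / (2 * (n:ℝ) + 1) + Real.log ((n:ℝ) + 1) / (2 * (n:ℝ) + 1))) atTop
          (nhds (Real.log (1 + x) - Real.log 2 - (1/2) * Real.log x - (0 + 0))) :=
        ((tendsto_const_nhds.sub (t1.mul_const _)).sub (t4.add t2))
      rw [show Real.log (1 + x) - Real.log 2 - (1/2) * Real.log x - (0 + 0)
          = Real.log (1 + x) - Real.log 2 - Real.log x / 2 by ring] at this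
      refine this.congr fun n => ?_
      rw [hglo_def]
      ring
    have hghi_lim : Tendsto ghi atTop
        (nhds (Real.log (1 + x) - Real.log 2 - Real.log x / 2)) := by
      have : Tendsto (fun n : ℕ => Real.log (1 + x) - Real.log 2
          - ((n : ℝ) / (2 * (n:ℝ) + 1)) * Real.log x
          + Real.log (2 * (n:ℝ) + 2) / (2 * (n:ℝ) + 1)) atTop
          (nhds (Real.log (1 + x) - Real.log 2 - (1/2) * Real.log x + 0)) :=
        ((tendsto_const_nhds.sub (t1.mul_const _)).add t3)
      rw [show Real.log (1 + x) - Real.log 2 - (1/2) * Real.log x + 0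
          = Real.log (1 + x) - Real.log 2 - Real.log x / 2 by ring] at this
      exact this
    -- the squeezed function
    have hbounds : ∀ n : ℕ, glo n ≤ Real.log (Shi n / Slo n) / (2 * (n:ℝ) + 1)
        ∧ Real.log (Shi n / Slo n) / (2 * (n:ℝ) + 1) ≤ ghi n := by
      intro n
      have hK := hKpos n
      have hSlo := hSlo_pos n
      have hShi := hShi_pos n
      have hC := hCpos n
      have hxn : (0:ℝ) < x ^ n := pow_pos hx0 n
      have hlogdiv : Real.log (Shi n / Slo n) = Real.log (Shi n) - Real.log (Slo n) :=
        Real.log_div hShi.ne' hSlo.ne'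
      -- cast of k
      have hkcast : ((2 * n + 1 : ℕ) : ℝ) = 2 * (n:ℝ) + 1 := by push_cast; ring
      -- log Shi upper
      have hB_ub : Real.log (Shi n) ≤ (2 * (n:ℝ) + 1) * Real.log (1 + x) := by
        have h1 : Shi n ≤ (1 + x) ^ (2 * n + 1) := by
          rw [← hsum n]; linarith [hSlo_pos n]
        calc Real.log (Shi n) ≤ Real.log ((1 + x) ^ (2 * n + 1)) :=
              Real.log_le_log hShi h1
          _ = ((2 * n + 1 : ℕ) : ℝ) * Real.log (1 + x) := Real.log_pow _ _
          _ = (2 * (n:ℝ) + 1) * Real.log (1 + x) := by rw [hkcast]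
      -- log Shi lower
      have hB_lb : (2 * (n:ℝ) + 1) * Real.log (1 + x) - Real.log 2 ≤ Real.log (Shi n) := by
        have h1 : (1 + x) ^ (2 * n + 1) ≤ 2 * Shi n := by
          rw [← hsum n]; linarith [hle n]
        have h2 : Real.log ((1 + x) ^ (2 * n + 1)) ≤ Real.log (2 * Shi n) :=
          Real.log_le_log (pow_pos (by linarith) _) h1
        rw [Real.log_pow, Real.log_mul (by norm_num) hShi.ne', hkcast] at h2
        linarith
      -- log Slo lower
      have hA_lb : (2 * (n:ℝ) + 1) * Real.log 2 - Real.log (2 * (n:ℝ) + 2)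
          + (n:ℝ) * Real.log x ≤ Real.log (Slo n) := by
        have h1 : Real.log ((((2 * n + 1).choose n : ℕ) : ℝ) * x ^ n) ≤ Real.log (Slo n) :=
          Real.log_le_log (mul_pos hC hxn) (hC_lo n)
        rw [Real.log_mul hC.ne' hxn.ne', Real.log_pow] at h1
        have h2 : (2 * (n:ℝ) + 1) * Real.log 2 - Real.log (2 * (n:ℝ) + 2)
            ≤ Real.log (((2 * n + 1).choose n : ℕ) : ℝ) := by
          have h3 : Real.log ((2:ℝ) ^ (2 * n + 1))
              ≤ Real.log ((2 * (n:ℝ) + 2) * (((2 * n + 1).choose n : ℕ) : ℝ)) :=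
            Real.log_le_log (by positivity) (h2C n)
          rw [Real.log_pow, Real.log_mul (by positivity) hC.ne', hkcast] at h3
          linarith
        linarith
      -- log Slo upper
      have hA_ub : Real.log (Slo n) ≤ Real.log ((n:ℝ) + 1)
          + (2 * (n:ℝ) + 1) * Real.log 2 + (n:ℝ) * Real.log x := by
        have h1 : Slo n ≤ ((n:ℝ) + 1) * ((2:ℝ) ^ (2 * n + 1) * x ^ n) := by
          calc Slo n ≤ ((n : ℝ) + 1) * ((((2 * n + 1).choose n : ℕ) : ℝ) * x ^ n) := hC_hi n
            _ ≤ ((n:ℝ) + 1) * ((2:ℝ) ^ (2 * n + 1) * x ^ n) := by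
                apply mul_le_mul_of_nonneg_left _ (by positivity)
                exact mul_le_mul_of_nonneg_right (hC2 n) hxn.le
        have h2 := Real.log_le_log hSlo h1
        rw [Real.log_mul (by positivity) (by positivity),
          Real.log_mul (by positivity) hxn.ne', Real.log_pow, Real.log_pow, hkcast] at h2
        linarith
      constructor
      · rw [le_div_iff₀ hK, hlogdiv, hglo_def]
        have hexp : (Real.log (1 + x) - Real.log 2
            - ((n : ℝ) / (2 * (n:ℝ) + 1)) * Real.log x
            - (Real.log 2 + Real.log ((n:ℝ) + 1)) / (2 * (n:ℝ) + 1)) * (2 * (n:ℝ) + 1)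
            = (2 * (n:ℝ) + 1) * Real.log (1 + x) - (2 * (n:ℝ) + 1) * Real.log 2
              - (n:ℝ) * Real.log x - (Real.log 2 + Real.log ((n:ℝ) + 1)) := by
          field_simp
        rw [hexp]
        linarith
      · rw [div_le_iff₀ hK, hlogdiv, hghi_def]
        have hexp : (Real.log (1 + x) - Real.log 2
            - ((n : ℝ) / (2 * (n:ℝ) + 1)) * Real.log x
            + Real.log (2 * (n:ℝ) + 2) / (2 * (n:ℝ) + 1)) * (2 * (n:ℝ) + 1)
            = (2 * (n:ℝ) + 1) * Real.log (1 + x) - (2 * (n:ℝ) + 1) * Real.log 2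
              - (n:ℝ) * Real.log x + Real.log (2 * (n:ℝ) + 2) := by
          field_simp
        rw [hexp]
        linarith
    have hmid_lim : Tendsto (fun n : ℕ => Real.log (Shi n / Slo n) / (2 * (n:ℝ) + 1)) atTop
        (nhds (Real.log (1 + x) - Real.log 2 - Real.log x / 2)) :=
      tendsto_of_tendsto_of_tendsto_of_le_of_le hglo_lim hghi_lim
        (fun n => (hbounds n).1) (fun n => (hbounds n).2)
    have hfinal := (Real.continuous_exp.tendsto _).comp hmid_lim
    rw [hT] at hfinal
    refine hfinal.congr fun n => ?_
    simp only [Function.comp_apply]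
    rw [hidx1 n, hidx2 n]
    have hpos : 0 < Shi n / Slo n := div_pos (hShi_pos n) (hSlo_pos n)
    rw [Real.rpow_def_of_pos hpos]
    congr 1
    rw [show ((2 * n + 1 : ℕ) : ℝ) = 2 * (n:ℝ) + 1 by push_cast; ring]
    ring
  · rw [lt_div_iff₀ (by positivity)]
    nlinarith [Real.sq_sqrt hx0.le, mul_pos (sub_pos.2 hsq1) (sub_pos.2 hsq1)]
end

section
/- Let x > 1 be a real number. Then, along odd positive integers k → ∞, the k-th root of the normalized lower half sum (sum_{i=0}^{floor(k/2)} binom(k,i) x^i) / (1+x)^k converges to 2√x/(1+x). -/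
open Filter Real Finset

theorem normalized_lower_half_limit (x : ℝ) (hx : 1 < x) :
    Filter.Tendsto
      (fun n : ℕ =>
        ((∑ i ∈ Finset.range ((2 * n + 1) / 2 + 1), ((2 * n + 1).choose i : ℝ) * x^i) /
          (1 + x)^(2 * n + 1)) ^ ((1 : ℝ) / ((2 * n + 1 : ℕ) : ℝ)))
      Filter.atTop (nhds (2 * Real.sqrt x / (1 + x))) := by
  have hx0 : (0:ℝ) < x := lt_trans one_pos hx
  have hx1 : (1:ℝ) ≤ x := le_of_lt hx
  have h1x : (0:ℝ) < 1 + x := by linarith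
  set c : ℝ := Real.log (4 * x) with hc
  set S : ℕ → ℝ := fun n => ∑ i ∈ Finset.range (n + 1), ((2 * n + 1).choose i : ℝ) * x ^ i
    with hS
  -- upper bound : S n ≤ (4x)^n
  have hub : ∀ n, S n ≤ (4 * x) ^ n := by
    intro n
    have h1 : S n ≤ ∑ i ∈ Finset.range (n + 1), ((2 * n + 1).choose i : ℝ) * x ^ n := by
      apply Finset.sum_le_sum
      intro i hi
      have hi' : i ≤ n := by simpa [Nat.lt_succ_iff] using hi
      exact mul_le_mul_of_nonneg_left (pow_le_pow_right₀ hx1 hi') (by positivity)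
    have h2 : ∑ i ∈ Finset.range (n + 1), ((2 * n + 1).choose i : ℝ) * x ^ n
        = (4:ℝ) ^ n * x ^ n := by
      rw [← Finset.sum_mul]
      congr 1
      exact_mod_cast Nat.sum_range_choose_halfway n
    rw [mul_pow]
    exact h1.trans h2.le
  -- lower bound : (4x)^n / (n+1) ≤ S n
  have hlb : ∀ n : ℕ, (4 * x) ^ n / ((n:ℝ) + 1) ≤ S n := by
    intro n
    have hmid : ∀ i, (2 * n + 1).choose i ≤ (2 * n + 1).choose n := by
      intro i
      have := Nat.choose_le_middle i (2 * n + 1)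
      have h2 : (2 * n + 1) / 2 = n := by omega
      rwa [h2] at this
    have hsum : (4 : ℕ) ^ n ≤ (n + 1) * (2 * n + 1).choose n := by
      calc (4:ℕ) ^ n = ∑ i ∈ Finset.range (n + 1), (2 * n + 1).choose i :=
            (Nat.sum_range_choose_halfway n).symm
        _ ≤ ∑ _i ∈ Finset.range (n + 1), (2 * n + 1).choose n :=
            Finset.sum_le_sum (fun i _ => hmid i)
        _ = (n + 1) * (2 * n + 1).choose n := by
            rw [Finset.sum_const, Finset.card_range, smul_eq_mul]
    have hsum' : (4 : ℝ) ^ n ≤ ((n:ℝ) + 1) * ((2 * n + 1).choose n : ℝ) := by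
      exact_mod_cast hsum
    have hn1 : (0:ℝ) < (n:ℝ) + 1 := by positivity
    have hC : (4:ℝ) ^ n / ((n:ℝ) + 1) ≤ ((2 * n + 1).choose n : ℝ) := by
      rw [div_le_iff₀ hn1]; linarith
    have hterm : ((2 * n + 1).choose n : ℝ) * x ^ n ≤ S n := by
      apply Finset.single_le_sum (f := fun i => ((2 * n + 1).choose i : ℝ) * x ^ i)
      · intro i _; positivity
      · exact Finset.self_mem_range_succ n
    calc (4 * x) ^ n / ((n:ℝ) + 1) = (4:ℝ)^n / ((n:ℝ)+1) * x ^ n := by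
          rw [mul_pow]; ring
      _ ≤ ((2 * n + 1).choose n : ℝ) * x ^ n :=
          mul_le_mul_of_nonneg_right hC (by positivity)
      _ ≤ S n := hterm
  have hSpos : ∀ n, 0 < S n := by
    intro n
    have := hlb n
    have h4x : (0:ℝ) < (4 * x) ^ n / ((n:ℝ) + 1) := by positivity
    linarith
  -- log limit
  set T : ℕ → ℝ := fun n => Real.log (S n) / (2 * (n:ℝ) + 1) with hT
  have hc2 : c / 2 = Real.log (2 * Real.sqrt x) := by
    rw [hc, Real.log_mul (by norm_num) (ne_of_gt hx0),
      Real.log_mul (by norm_num) (ne_of_gt (Real.sqrt_pos.2 hx0)),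
      Real.log_sqrt hx0.le]
    have : Real.log 4 = 2 * Real.log 2 := by
      rw [show (4:ℝ) = 2 ^ 2 by norm_num, Real.log_pow]; push_cast; ring
    rw [this]; ring
  have hhalf : Tendsto (fun n : ℕ => (n:ℝ) / (2 * (n:ℝ) + 1)) atTop (nhds (1/2)) := by
    have h1 : Tendsto (fun n : ℕ => 2 + 1 / (n:ℝ)) atTop (nhds 2) := by
      have : Tendsto (fun n : ℕ => 1 / (n:ℝ)) atTop (nhds 0) := tendsto_one_div_atTop_nhds_zero_nat
      simpa using (tendsto_const_nhds (x := (2:ℝ))).add this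
    have h2 : Tendsto (fun n : ℕ => 1 / (2 + 1 / (n:ℝ))) atTop (nhds (1/2)) :=
      Filter.Tendsto.div tendsto_const_nhds h1 (by norm_num)
    apply h2.congr'
    filter_upwards [eventually_ge_atTop 1] with n hn
    have hn' : (0:ℝ) < (n:ℝ) := by exact_mod_cast hn
    field_simp
  have hlogdiv : Tendsto (fun n : ℕ => Real.log ((n:ℝ) + 1) / (2 * (n:ℝ) + 1)) atTop
      (nhds 0) := by
    have h1 : Tendsto (fun y : ℝ => Real.log y ^ 1 / (2 * y + (-1))) atTop (nhds 0) :=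
      Real.tendsto_pow_log_div_mul_add_atTop 2 (-1) 1 (by norm_num)
    have h2 : Tendsto (fun n : ℕ => ((n:ℝ) + 1)) atTop atTop :=
      tendsto_atTop_add_const_right _ 1 tendsto_natCast_atTop_atTop
    have := h1.comp h2
    apply this.congr
    intro n; simp; ring_nf
  have hU : Tendsto (fun n : ℕ => (n:ℝ) * c / (2 * (n:ℝ) + 1)) atTop (nhds (c / 2)) := by
    have h := hhalf.mul_const c
    have he : (1:ℝ)/2 * c = c / 2 := by ring
    rw [he] at h
    apply h.congr
    intro n; ring
  have hL : Tendsto (fun n : ℕ => ((n:ℝ) * c - Real.log ((n:ℝ) + 1)) / (2 * (n:ℝ) + 1))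
      atTop (nhds (c / 2)) := by
    have := hU.sub hlogdiv
    simp only [sub_zero] at this
    apply this.congr
    intro n; ring
  have hden : ∀ n : ℕ, (0:ℝ) < 2 * (n:ℝ) + 1 := by intro n; positivity
  have hTlim : Tendsto T atTop (nhds (c / 2)) := by
    apply tendsto_of_tendsto_of_tendsto_of_le_of_le hL hU
    · intro n
      show ((n:ℝ) * c - Real.log ((n:ℝ) + 1)) / (2 * (n:ℝ) + 1) ≤
        Real.log (S n) / (2 * (n:ℝ) + 1)
      gcongr
      have h1 : (0:ℝ) < (4 * x) ^ n / ((n:ℝ) + 1) := by positivity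
      have := Real.log_le_log h1 (hlb n)
      rwa [Real.log_div (by positivity) (by positivity), Real.log_pow, ← hc] at this
      -- goal shape : n * c - log (n+1) ≤ log (S n) ... handled by rwa? maybe not
    · intro n
      show Real.log (S n) / (2 * (n:ℝ) + 1) ≤ (n:ℝ) * c / (2 * (n:ℝ) + 1)
      gcongr
      have := Real.log_le_log (hSpos n) (hub n)
      rwa [Real.log_pow, ← hc] at this
  -- exponentiate and divide
  have hfinal : Tendsto (fun n : ℕ => Real.exp (T n) / (1 + x)) atTop
      (nhds (2 * Real.sqrt x / (1 + x))) := by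
    have hexp : Tendsto (fun n : ℕ => Real.exp (T n)) atTop (nhds (Real.exp (c / 2))) :=
      (Real.continuous_exp.continuousAt.tendsto).comp hTlim
    have : Real.exp (c / 2) = 2 * Real.sqrt x := by
      rw [hc2, Real.exp_log (by positivity)]
    rw [this] at hexp
    exact hexp.div_const _
  apply hfinal.congr
  intro n
  have hk : (2 * n + 1) / 2 + 1 = n + 1 := by omega
  have hK : ((2 * n + 1 : ℕ) : ℝ) = 2 * (n:ℝ) + 1 := by push_cast; ring
  have hKne : ((2 * n + 1 : ℕ) : ℝ) ≠ 0 := by rw [hK]; positivity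
  rw [hk]
  rw [Real.div_rpow (le_of_lt (hSpos n)) (by positivity)]
  have h1 : (S n) ^ ((1:ℝ) / ((2 * n + 1 : ℕ) : ℝ)) = Real.exp (T n) := by
    rw [Real.rpow_def_of_pos (hSpos n), hT]
    congr 1
    rw [hK]; ring
  have h2 : ((1 + x) ^ (2 * n + 1)) ^ ((1:ℝ) / ((2 * n + 1 : ℕ) : ℝ)) = 1 + x := by
    rw [← Real.rpow_natCast (1 + x) (2 * n + 1), ← Real.rpow_mul h1x.le,
      mul_one_div, div_self hKne, Real.rpow_one]
  rw [h1, h2]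
end

section
/- Let c > d > 0 with c + d ≤ 1 and let q > 1. Let s < 0 solve 2^{-q}c^s + 2^{-q}d^s = 1. Define for odd k: X_k = sum_{i=0}^{floor(k/2)} binom(k,i) 2^{-kq} (c^{k-i} d^i)^s. Then X_k^{1/k} → 2(d/c)^{s/2}/((d/c)^s + 1) as k → ∞ along odd integers, and this limit lies strictly between 0 and 1. -/
open Real Filter Finset

lemma chain_le' {f : ℕ → ℝ} : ∀ n : ℕ, (∀ i, i < n → f i ≤ f (i+1)) → ∀ i, i ≤ n → f i ≤ f n := by
  intro n
  induction n with
  | zero => intro _ i hi; simp [Nat.le_zero.mp hi]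
  | succ m ih =>
    intro h i hi
    rcases Nat.eq_or_lt_of_le hi with rfl | hlt
    · exact le_rfl
    · exact le_trans (ih (fun j hj => h j (hj.trans (Nat.lt_succ_self m))) i (Nat.lt_succ_iff.mp hlt))
        (h m (Nat.lt_succ_self m))

lemma rpow_tendsto_exp' {x : ℝ} (hx : 0 < x) {e : ℕ → ℝ} {L : ℝ}
    (he : Tendsto e atTop (nhds L)) :
    Tendsto (fun n => x ^ e n) atTop (nhds (x ^ L)) := by
  have hc : Continuous fun y : ℝ => x ^ y := by
    simp only [Real.rpow_def_of_pos hx]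
    exact Real.continuous_exp.comp (continuous_const.mul continuous_id)
  exact (hc.tendsto L).comp he

lemma frac_tendsto' (α : ℝ) :
    Tendsto (fun n : ℕ => ((n:ℝ)+α) * (1/(2*(n:ℝ)+1))) atTop (nhds (1/2)) := by
  have h1 : Tendsto (fun n : ℕ => 2*(n:ℝ)+1) atTop atTop := by
    apply tendsto_atTop_add_const_right
    exact tendsto_natCast_atTop_atTop.const_mul_atTop two_pos
  have h2 : Tendsto (fun n : ℕ => (α - 1/2)/(2*(n:ℝ)+1)) atTop (nhds 0) :=
    tendsto_const_nhds.div_atTop h1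
  have h3 := h2.const_add (1/2 : ℝ)
  rw [add_zero] at h3
  apply h3.congr
  intro n
  have hne : (2*(n:ℝ)+1) ≠ 0 := by positivity
  field_simp
  ring

lemma pow_small_tendsto_one' {f : ℕ → ℝ} (h1 : ∀ n, 1 ≤ f n) (h2 : ∀ n, f n ≤ 2*(n:ℝ)+2)
    {e : ℕ → ℝ} (he : ∀ n, |e n| ≤ 1/(2*(n:ℝ)+1)) :
    Tendsto (fun n => f n ^ e n) atTop (nhds 1) := by
  have hfpos : ∀ n, 0 < f n := fun n => lt_of_lt_of_le one_pos (h1 n)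
  have key : Tendsto (fun n => Real.log (f n) * e n) atTop (nhds 0) := by
    apply squeeze_zero_norm (a := fun n : ℕ => 2 * (Real.log (2*(n:ℝ)+2)/(2*(n:ℝ)+2)))
    · intro n
      have hn1 : (0:ℝ) < 2*(n:ℝ)+1 := by positivity
      have hn2 : (0:ℝ) < 2*(n:ℝ)+2 := by positivity
      have hlog0 : 0 ≤ Real.log (f n) := Real.log_nonneg (h1 n)
      have hlogle : Real.log (f n) ≤ Real.log (2*(n:ℝ)+2) := Real.log_le_log (hfpos n) (h2 n)
      have hlog2 : 0 ≤ Real.log (2*(n:ℝ)+2) := hlog0.trans hlogle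
      calc ‖Real.log (f n) * e n‖ = Real.log (f n) * |e n| := by
            rw [norm_mul, Real.norm_eq_abs, Real.norm_eq_abs, abs_of_nonneg hlog0]
        _ ≤ Real.log (2*(n:ℝ)+2) * (1/(2*(n:ℝ)+1)) :=
            mul_le_mul hlogle (he n) (abs_nonneg _) hlog2
        _ ≤ Real.log (2*(n:ℝ)+2) * (2/(2*(n:ℝ)+2)) := by
            apply mul_le_mul_of_nonneg_left _ hlog2
            rw [div_le_div_iff₀ hn1 hn2]
            nlinarith
        _ = 2 * (Real.log (2*(n:ℝ)+2)/(2*(n:ℝ)+2)) := by ring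
    · have hl := Real.isLittleO_log_id_atTop.tendsto_div_nhds_zero
      have hcomp : Tendsto (fun n : ℕ => 2*(n:ℝ)+2) atTop atTop := by
        apply tendsto_atTop_add_const_right
        exact tendsto_natCast_atTop_atTop.const_mul_atTop two_pos
      have := (hl.comp hcomp).const_mul (2:ℝ)
      simpa using this
  have h4 := (Real.continuous_exp.tendsto 0).comp key
  rw [Real.exp_zero] at h4
  exact h4.congr fun n => (Real.rpow_def_of_pos (hfpos n) (e n)).symm

theorem Xk_root_limit (c d q s : ℝ) (hd : 0 < d) (hdc : d < c) (hcd : c + d ≤ 1)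
    (hq : 1 < q) (hs : s < 0) (heq : (2:ℝ)^(-q) * c^s + (2:ℝ)^(-q) * d^s = 1) :
    Filter.Tendsto
      (fun n : ℕ =>
        (∑ i ∈ Finset.range ((2 * n + 1) / 2 + 1),
            ((2 * n + 1).choose i : ℝ) * (2:ℝ)^(-((2 * n + 1 : ℕ) : ℝ) * q) *
              ((c^(2 * n + 1 - i) * d^i) : ℝ)^s) ^ ((1 : ℝ) / ((2 * n + 1 : ℕ) : ℝ)))
      Filter.atTop (nhds (2 * (d / c)^(s / 2) / ((d / c)^s + 1))) ∧
    0 < 2 * (d / c)^(s / 2) / ((d / c)^s + 1) ∧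
    2 * (d / c)^(s / 2) / ((d / c)^s + 1) < 1 := by
  have hc : 0 < c := hd.trans hdc
  have h2q : (0:ℝ) < 2^(-q) := Real.rpow_pos_of_pos two_pos _
  obtain ⟨a, ha_def⟩ : ∃ a : ℝ, a = 2^(-q) * c^s := ⟨_, rfl⟩
  obtain ⟨b, hb_def⟩ : ∃ b : ℝ, b = 2^(-q) * d^s := ⟨_, rfl⟩
  rw [← ha_def, ← hb_def] at heq
  have ha : 0 < a := ha_def ▸ mul_pos h2q (Real.rpow_pos_of_pos hc s)
  have hb : 0 < b := hb_def ▸ mul_pos h2q (Real.rpow_pos_of_pos hd s)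
  have hab : a < b := by
    rw [ha_def, hb_def]
    exact mul_lt_mul_of_pos_left (Real.rpow_lt_rpow_of_neg hd hdc hs) h2q
  obtain ⟨x, hx_def⟩ : ∃ x : ℝ, x = a ^ ((1:ℝ)/2) := ⟨_, rfl⟩
  obtain ⟨y, hy_def⟩ : ∃ y : ℝ, y = b ^ ((1:ℝ)/2) := ⟨_, rfl⟩
  have hx : 0 < x := hx_def ▸ Real.rpow_pos_of_pos ha _
  have hy : 0 < y := hy_def ▸ Real.rpow_pos_of_pos hb _
  have hx0 : x ≠ 0 := hx.ne'
  have hy0 : y ≠ 0 := hy.ne'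
  have hxy : x < y := by
    rw [hx_def, hy_def]; exact Real.rpow_lt_rpow ha.le hab (by norm_num)
  have hx2 : x * x = a := by rw [hx_def, ← Real.rpow_add ha]; norm_num
  have hy2 : y * y = b := by rw [hy_def, ← Real.rpow_add hb]; norm_num
  have hsum1 : x * x + (y * y) = 1 := by rw [hx2, hy2]; exact heq
  -- target value
  have hdivs : (d/c)^s = b/a := by
    rw [Real.div_rpow hd.le hc.le, hb_def, ha_def, mul_div_mul_left _ _ (ne_of_gt h2q)]
  have hhalf : (d/c)^(s/2) = y / x := by
    rw [show s/2 = s * ((1:ℝ)/2) by ring, Real.rpow_mul (by positivity : (0:ℝ) ≤ d/c), hdivs,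
      Real.div_rpow hb.le ha.le, ← hx_def, ← hy_def]
  have hT : 2 * (d/c)^(s/2) / ((d/c)^s + 1) = 2 * x * y := by
    rw [hhalf, hdivs, ← hx2, ← hy2]
    have h1 : y*y/(x*x) + 1 = (y*y + x*x)/(x*x) := by field_simp
    rw [h1, show y*y + x*x = 1 by linarith]
    field_simp
  rw [hT]
  refine ⟨?_, mul_pos (mul_pos two_pos hx) hy,
    by nlinarith [mul_pos (sub_pos.mpr hxy) (sub_pos.mpr hxy)]⟩
  -- sum rewrite
  have hpowrs : ∀ (z:ℝ), 0 < z → ∀ m : ℕ, (z^m)^s = (z^s)^m := by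
    intro z hz m
    rw [← Real.rpow_natCast z m, ← Real.rpow_natCast (z^s) m, ← Real.rpow_mul hz.le,
      ← Real.rpow_mul hz.le, mul_comm]
  have hterm : ∀ n i : ℕ, i ≤ 2*n+1 →
      ((2*n+1).choose i : ℝ) * 2^(-((2*n+1:ℕ):ℝ)*q) * (c^(2*n+1-i) * d^i)^s
        = ((2*n+1).choose i : ℝ) * (a^(2*n+1-i) * b^i) := by
    intro n i hik
    have h2k : (2:ℝ)^(-((2*n+1:ℕ):ℝ)*q) = ((2:ℝ)^(-q))^(2*n+1 : ℕ) := by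
      rw [← Real.rpow_natCast ((2:ℝ)^(-q)) (2*n+1), ← Real.rpow_mul (by norm_num : (0:ℝ) ≤ 2)]
      congr 1; ring
    rw [Real.mul_rpow (by positivity) (by positivity), hpowrs c hc, hpowrs d hd, h2k,
      ← pow_sub_mul_pow ((2:ℝ)^(-q)) hik, ha_def, hb_def, mul_pow, mul_pow]
    ring
  have hsum_eq : ∀ n : ℕ,
      (∑ i ∈ Finset.range ((2*n+1)/2+1),
        ((2*n+1).choose i : ℝ) * 2^(-((2*n+1:ℕ):ℝ)*q) * (c^(2*n+1-i) * d^i)^s)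
      = ∑ i ∈ Finset.range (n+1), ((2*n+1).choose i : ℝ) * (a^(2*n+1-i) * b^i) := by
    intro n
    rw [show (2*n+1)/2+1 = n+1 from by omega]
    exact Finset.sum_congr rfl fun i hi => hterm n i (by have := Finset.mem_range.mp hi; omega)
  -- bounds on the sum
  have hbound : ∀ n : ℕ,
      ((4:ℝ)^n/(2*(n:ℝ)+1)) * (a^(n+1) * b^n)
        ≤ (∑ i ∈ Finset.range (n+1), ((2*n+1).choose i : ℝ) * (a^(2*n+1-i) * b^i)) ∧
      (∑ i ∈ Finset.range (n+1), ((2*n+1).choose i : ℝ) * (a^(2*n+1-i) * b^i))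
        ≤ ((n:ℝ)+1) * ((4:ℝ)^n * (a^(n+1) * b^n)) := by
    intro n
    set t : ℕ → ℝ := fun i => ((2*n+1).choose i : ℝ) * (a^(2*n+1-i) * b^i) with ht_def
    have hstep : ∀ i, i < n → t i ≤ t (i+1) := by
      intro i hin
      have hch : (2*n+1).choose i ≤ (2*n+1).choose (i+1) :=
        Nat.choose_le_succ_of_lt_half_left (by omega)
      have key : ((2*n+1).choose i : ℝ) * a ≤ ((2*n+1).choose (i+1) : ℝ) * b :=
        mul_le_mul (by exact_mod_cast hch) hab.le ha.le (Nat.cast_nonneg _)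
      have h1 : 2*n+1-i = (2*n+1-(i+1)) + 1 := by omega
      have h2 : t i = (((2*n+1).choose i : ℝ) * a) * (a^(2*n+1-(i+1)) * b^i) := by
        rw [ht_def]; simp only []; rw [h1, pow_succ]; ring
      have h3 : t (i+1) = (((2*n+1).choose (i+1) : ℝ) * b) * (a^(2*n+1-(i+1)) * b^i) := by
        rw [ht_def]; simp only []; rw [pow_succ]; ring
      rw [h2, h3]
      exact mul_le_mul_of_nonneg_right key
        (mul_nonneg (pow_nonneg ha.le _) (pow_nonneg hb.le _))
    have hmax : ∀ i ∈ Finset.range (n+1), t i ≤ t n :=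
      fun i hi => chain_le' n hstep i (Nat.lt_succ_iff.mp (Finset.mem_range.mp hi))
    have htn : t n = ((2*n+1).choose n : ℝ) * (a^(n+1) * b^n) := by
      rw [ht_def]; simp only []; rw [show 2*n+1-n = n+1 from by omega]
    have hcn_up : ((2*n+1).choose n : ℝ) ≤ 4^n := by exact_mod_cast Nat.choose_middle_le_pow n
    have hcn_lo : (4:ℝ)^n ≤ (2*(n:ℝ)+1) * ((2*n+1).choose n : ℝ) := by
      have h1 := Nat.four_pow_le_two_mul_add_one_mul_central_binom n
      have h2 : (2*n).choose n ≤ (2*n+1).choose n := Nat.choose_le_choose n (by omega)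
      have h3 : 4^n ≤ (2*n+1) * ((2*n+1).choose n) := le_trans h1 (Nat.mul_le_mul_left _ h2)
      exact_mod_cast h3
    constructor
    · have hlb : t n ≤ ∑ i ∈ Finset.range (n+1), t i :=
        Finset.single_le_sum (f := t) (fun i _ => mul_nonneg (Nat.cast_nonneg _)
          (mul_nonneg (pow_nonneg ha.le _) (pow_nonneg hb.le _))) (Finset.self_mem_range_succ n)
      refine le_trans ?_ hlb
      rw [htn]
      apply mul_le_mul_of_nonneg_right _
        (mul_nonneg (pow_nonneg ha.le _) (pow_nonneg hb.le _))
      rw [div_le_iff₀ (by positivity)]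
      linarith
    · calc (∑ i ∈ Finset.range (n+1), t i) ≤ ∑ _i ∈ Finset.range (n+1), t n :=
            Finset.sum_le_sum hmax
        _ = ((n:ℝ)+1) * t n := by
            rw [Finset.sum_const, Finset.card_range, nsmul_eq_mul]; push_cast; ring
        _ ≤ ((n:ℝ)+1) * ((4:ℝ)^n * (a^(n+1) * b^n)) := by
            rw [htn]
            apply mul_le_mul_of_nonneg_left _ (by positivity)
            exact mul_le_mul_of_nonneg_right hcn_up
              (mul_nonneg (pow_nonneg ha.le _) (pow_nonneg hb.le _))
  -- limits of the bounding sequences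
  have hκpos : ∀ n : ℕ, (0:ℝ) < 2*(n:ℝ)+1 := fun n => by positivity
  have hfrac0 : Tendsto (fun n : ℕ => (n:ℝ) * (1/(2*(n:ℝ)+1))) atTop (nhds (1/2)) := by
    have := frac_tendsto' 0
    simpa using this
  have hfrac1 : Tendsto (fun n : ℕ => ((n:ℝ)+1) * (1/(2*(n:ℝ)+1))) atTop (nhds (1/2)) :=
    frac_tendsto' 1
  have h4lim : Tendsto (fun n : ℕ => (4:ℝ) ^ ((n:ℝ) * (1/(2*(n:ℝ)+1)))) atTop (nhds 2) := by
    have := rpow_tendsto_exp' (by norm_num : (0:ℝ) < 4) hfrac0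
    have h42 : (4:ℝ) ^ ((1:ℝ)/2) = 2 := by
      rw [show (4:ℝ) = 2^(2:ℕ) by norm_num, ← Real.rpow_natCast 2 2,
        ← Real.rpow_mul (by norm_num : (0:ℝ) ≤ 2)]
      norm_num
    rwa [h42] at this
  have halim : Tendsto (fun n : ℕ => a ^ (((n:ℝ)+1) * (1/(2*(n:ℝ)+1)))) atTop (nhds x) := by
    rw [hx_def]; exact rpow_tendsto_exp' ha hfrac1
  have hblim : Tendsto (fun n : ℕ => b ^ ((n:ℝ) * (1/(2*(n:ℝ)+1)))) atTop (nhds y) := by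
    rw [hy_def]; exact rpow_tendsto_exp' hb hfrac0
  have hinvlim : Tendsto (fun n : ℕ => (2*(n:ℝ)+1) ^ (-(1/(2*(n:ℝ)+1)))) atTop (nhds 1) := by
    apply pow_small_tendsto_one' (f := fun n : ℕ => 2*(n:ℝ)+1)
    · intro n; have : (0:ℝ) ≤ (n:ℝ) := Nat.cast_nonneg n; linarith
    · intro n; linarith [Nat.cast_nonneg (α := ℝ) n]
    · intro n
      rw [abs_neg, abs_of_nonneg (by positivity : (0:ℝ) ≤ 1/(2*(n:ℝ)+1))]
  have hn1lim : Tendsto (fun n : ℕ => ((n:ℝ)+1) ^ (1/(2*(n:ℝ)+1))) atTop (nhds 1) := by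
    apply pow_small_tendsto_one' (f := fun n : ℕ => (n:ℝ)+1)
    · intro n; linarith [Nat.cast_nonneg (α := ℝ) n]
    · intro n; linarith [Nat.cast_nonneg (α := ℝ) n]
    · intro n
      rw [abs_of_nonneg (by positivity : (0:ℝ) ≤ 1/(2*(n:ℝ)+1))]
  -- lower bounding sequence tends to 2*x*y
  have hlowlim : Tendsto (fun n : ℕ =>
      (((4:ℝ)^n/(2*(n:ℝ)+1)) * (a^(n+1) * b^n)) ^ (1/(2*(n:ℝ)+1))) atTop (nhds (2*x*y)) := by
    have hmul := ((h4lim.mul hinvlim).mul (halim.mul hblim))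
    have hval : ((2:ℝ) * 1) * (x * y) = 2*x*y := by ring
    rw [hval] at hmul
    apply hmul.congr
    intro n
    rw [Real.mul_rpow (by positivity)
        (mul_nonneg (pow_nonneg ha.le _) (pow_nonneg hb.le _)),
      Real.div_rpow (by positivity) (by positivity),
      Real.mul_rpow (pow_nonneg ha.le _) (pow_nonneg hb.le _),
      ← Real.rpow_natCast (4:ℝ) n, ← Real.rpow_natCast a (n+1), ← Real.rpow_natCast b n,
      ← Real.rpow_mul (by norm_num : (0:ℝ) ≤ 4), ← Real.rpow_mul ha.le, ← Real.rpow_mul hb.le,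
      Real.rpow_neg (hκpos n).le]
    push_cast
    ring
  -- upper bounding sequence tends to 2*x*y
  have hhighlim : Tendsto (fun n : ℕ =>
      (((n:ℝ)+1) * ((4:ℝ)^n * (a^(n+1) * b^n))) ^ (1/(2*(n:ℝ)+1))) atTop (nhds (2*x*y)) := by
    have hmul := (hn1lim.mul ((h4lim.mul halim).mul hblim))
    have hval : (1:ℝ) * (((2:ℝ) * x) * y) = 2*x*y := by ring
    rw [hval] at hmul
    apply hmul.congr
    intro n
    rw [Real.mul_rpow (by positivity)
        (mul_nonneg (by positivity) (mul_nonneg (pow_nonneg ha.le _) (pow_nonneg hb.le _))),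
      Real.mul_rpow (by positivity)
        (mul_nonneg (pow_nonneg ha.le _) (pow_nonneg hb.le _)),
      Real.mul_rpow (pow_nonneg ha.le _) (pow_nonneg hb.le _),
      ← Real.rpow_natCast (4:ℝ) n, ← Real.rpow_natCast a (n+1), ← Real.rpow_natCast b n,
      ← Real.rpow_mul (by norm_num : (0:ℝ) ≤ 4), ← Real.rpow_mul ha.le, ← Real.rpow_mul hb.le]
    push_cast
    ring
  -- squeeze
  refine tendsto_of_tendsto_of_tendsto_of_le_of_le hlowlim hhighlim ?_ ?_
  · intro n
    show _ ≤ (∑ i ∈ Finset.range ((2*n+1)/2+1),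
        ((2*n+1).choose i : ℝ) * 2^(-((2*n+1:ℕ):ℝ)*q) * (c^(2*n+1-i) * d^i)^s)
          ^ ((1:ℝ)/((2*n+1:ℕ):ℝ))
    rw [hsum_eq n, show ((2*n+1:ℕ):ℝ) = 2*(n:ℝ)+1 from by push_cast; ring]
    exact Real.rpow_le_rpow
      (mul_nonneg (by positivity) (mul_nonneg (pow_nonneg ha.le _) (pow_nonneg hb.le _)))
      (hbound n).1 (by positivity)
  · intro n
    show (∑ i ∈ Finset.range ((2*n+1)/2+1),
        ((2*n+1).choose i : ℝ) * 2^(-((2*n+1:ℕ):ℝ)*q) * (c^(2*n+1-i) * d^i)^s)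
          ^ ((1:ℝ)/((2*n+1:ℕ):ℝ)) ≤ _
    rw [hsum_eq n, show ((2*n+1:ℕ):ℝ) = 2*(n:ℝ)+1 from by push_cast; ring]
    have hSnonneg : (0:ℝ) ≤ ∑ i ∈ Finset.range (n+1),
        ((2*n+1).choose i : ℝ) * (a^(2*n+1-i) * b^i) :=
      Finset.sum_nonneg fun i _ => mul_nonneg (Nat.cast_nonneg _)
        (mul_nonneg (pow_nonneg ha.le _) (pow_nonneg hb.le _))
    exact Real.rpow_le_rpow hSnonneg (hbound n).2 (by positivity)
end

section
/- Let c > d > 0 with c + d ≤ 1 and q > 1, and let s < 0 solve 2^{-q}c^s + 2^{-q}d^s = 1. Define Ψ_k = sum_{i=0}^{k} binom(k,i) 2^{-kq} (c^{max(i,k-i)} d^{min(i,k-i)})^s. Then, along odd integers k → ∞, Ψ_k^{1/k} converges to δ := 2(d/c)^{s/2}/((d/c)^s + 1), and δ < 1. -/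
open Real Filter Finset

private lemma aux_pow_le (A B : ℝ) (hA : 0 < A) (hB : 0 < B) (hAB : A ≤ B)
    (m l : ℕ) (hlm : l ≤ m) : A ^ m * B ^ l ≤ Real.sqrt (A * B) ^ (m + l) := by
  set G := Real.sqrt (A * B) with hGdef
  have hG : 0 ≤ G := Real.sqrt_nonneg _
  have hG2 : G ^ 2 = A * B := Real.sq_sqrt (by positivity)
  have key : (A ^ m * B ^ l) ^ 2 ≤ (G ^ (m + l)) ^ 2 := by
    have e0 : (A ^ m * B ^ l) ^ 2 = A ^ (2 * m) * B ^ (2 * l) := by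
      rw [mul_pow, ← pow_mul, ← pow_mul]; ring_nf
    have e1 : (G ^ (m + l)) ^ 2 = A ^ (m + l) * B ^ (m + l) := by
      rw [← pow_mul, mul_comm (m + l) 2, pow_mul, hG2, mul_pow]
    rw [e0, e1]
    have e2 : A ^ (2 * m) = A ^ (m + l) * A ^ (m - l) := by
      rw [← pow_add]; congr 1; omega
    have e3 : B ^ (m + l) = B ^ (m - l) * B ^ (2 * l) := by
      rw [← pow_add]; congr 1; omega
    rw [e2, e3, mul_assoc]
    gcongr
  have h1 : A ^ m * B ^ l = Real.sqrt ((A ^ m * B ^ l) ^ 2) := (Real.sqrt_sq (by positivity)).symm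
  have h2 : G ^ (m + l) = Real.sqrt ((G ^ (m + l)) ^ 2) := (Real.sqrt_sq (by positivity)).symm
  rw [h1, h2]
  exact Real.sqrt_le_sqrt key

private lemma aux_split (c d s : ℝ) (hc : 0 < c) (hd : 0 < d) (m l : ℕ) :
    ((c ^ m * d ^ l : ℝ)) ^ s = (c ^ s) ^ m * (d ^ s) ^ l := by
  rw [Real.mul_rpow (by positivity) (by positivity),
    ← Real.rpow_natCast c m, ← Real.rpow_natCast d l,
    ← Real.rpow_mul hc.le, ← Real.rpow_mul hd.le, mul_comm (m:ℝ) s, mul_comm (l:ℝ) s,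
    Real.rpow_mul hc.le, Real.rpow_mul hd.le, Real.rpow_natCast, Real.rpow_natCast]

private lemma aux_delta (A B : ℝ) (hA : 0 < A) (hB : 0 < B) :
    2 * Real.sqrt (B / A) / (B / A + 1) = 2 * (A + B)⁻¹ * Real.sqrt (A * B) := by
  have h1 : B / A + 1 = (A + B) / A := by field_simp; ring
  rw [div_eq_iff (by positivity : B / A + 1 ≠ 0), Real.sqrt_div hB.le,
    Real.sqrt_mul hA.le, h1]
  have h2 : 2 * (A + B)⁻¹ * (Real.sqrt A * Real.sqrt B) * ((A + B) / A) =
      2 * (Real.sqrt A * Real.sqrt B) / A * ((A + B) * (A + B)⁻¹) := by ring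
  rw [h2, mul_inv_cancel₀ (by positivity : (A + B) ≠ 0), mul_one]
  have h3 : 2 * (Real.sqrt B / Real.sqrt A) = 2 * Real.sqrt B * (Real.sqrt A / A) := by
    rw [Real.sqrt_div_self']
    ring
  rw [h3, Real.sqrt_div_self']
  field_simp
  linear_combination (-1) * Real.mul_self_sqrt hA.le

theorem Psi_root_limit (c d q s : ℝ) (hd : 0 < d) (hdc : d < c) (hcd : c + d ≤ 1)
    (hq : 1 < q) (hs : s < 0) (heq : (2:ℝ)^(-q) * c^s + (2:ℝ)^(-q) * d^s = 1) :
    Filter.Tendsto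
      (fun n : ℕ =>
        (∑ i ∈ Finset.range (2 * n + 1 + 1),
            ((2 * n + 1).choose i : ℝ) * (2:ℝ)^(-((2 * n + 1 : ℕ) : ℝ) * q) *
              ((c^(max i (2 * n + 1 - i)) * d^(min i (2 * n + 1 - i))) : ℝ)^s)
          ^ ((1 : ℝ) / ((2 * n + 1 : ℕ) : ℝ)))
      Filter.atTop (nhds (2 * (d / c)^(s / 2) / ((d / c)^s + 1))) ∧
    2 * (d / c)^(s / 2) / ((d / c)^s + 1) < 1 := by
  have hc : 0 < c := hd.trans hdc
  set A := c ^ s with hA_def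
  set B := d ^ s with hB_def
  have hA : 0 < A := Real.rpow_pos_of_pos hc s
  have hB : 0 < B := Real.rpow_pos_of_pos hd s
  have hAB : A < B := Real.rpow_lt_rpow_of_neg hd hdc hs
  have h2q : (0:ℝ) < (2:ℝ) ^ q := Real.rpow_pos_of_pos two_pos q
  have h2q' : ((2:ℝ) ^ (-q)) = ((2:ℝ) ^ q)⁻¹ := by
    rw [Real.rpow_neg (by norm_num)]
  have hsum : A + B = 2 ^ q := by
    rw [h2q'] at heq
    field_simp at heq
    linarith
  set G := Real.sqrt (A * B) with hGdef
  have hG : 0 < G := Real.sqrt_pos.2 (by positivity)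
  have hG2 : G ^ 2 = A * B := Real.sq_sqrt (by positivity)
  set δ := 2 * (2:ℝ) ^ (-q) * G with hδdef
  have hδpos : 0 < δ := by positivity
  have hDδ : 2 * (d / c) ^ (s / 2) / ((d / c) ^ s + 1) = δ := by
    have hds : (d / c) ^ s = B / A := Real.div_rpow hd.le hc.le s
    have hds2 : (d / c) ^ (s / 2) = Real.sqrt (B / A) := by
      rw [show s / 2 = s * (1 / 2) by ring, Real.rpow_mul (by positivity), hds,
        ← Real.sqrt_eq_rpow]
    rw [hds, hds2, aux_delta A B hA hB, hδdef, h2q', ← hsum, hGdef]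
  have hδlt : δ < 1 := by
    have h2G : 2 * G < A + B := by
      nlinarith [mul_pos (sub_pos.2 hAB) (sub_pos.2 hAB), hG2, hG.le]
    rw [hδdef, h2q', ← hsum]
    calc 2 * (A + B)⁻¹ * G = (2 * G) / (A + B) := by ring
    _ < (A + B) / (A + B) := by gcongr
    _ = 1 := div_self (by positivity)
  refine ⟨?_, by rw [hDδ]; exact hδlt⟩
  rw [hDδ]
  set Φ : ℕ → ℝ := fun n =>
      ∑ i ∈ Finset.range (2 * n + 1 + 1),
        ((2 * n + 1).choose i : ℝ) * (2:ℝ)^(-((2 * n + 1 : ℕ) : ℝ) * q) *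
          ((c^(max i (2 * n + 1 - i)) * d^(min i (2 * n + 1 - i))) : ℝ)^s with hΦdef
  have h2k : ∀ n : ℕ, (2:ℝ) ^ (-((2 * n + 1 : ℕ) : ℝ) * q) = ((2:ℝ) ^ (-q)) ^ (2 * n + 1) := by
    intro n
    rw [show -((2 * n + 1 : ℕ) : ℝ) * q = (-q) * ((2 * n + 1 : ℕ) : ℝ) by ring,
      Real.rpow_mul (by norm_num), Real.rpow_natCast]
  have h2kpos : ∀ n : ℕ, (0:ℝ) < (2:ℝ) ^ (-((2 * n + 1 : ℕ) : ℝ) * q) := fun n =>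
    Real.rpow_pos_of_pos two_pos _
  have hupper : ∀ n : ℕ, Φ n ≤ δ ^ (2 * n + 1) := by
    intro n
    calc Φ n ≤ ∑ i ∈ Finset.range (2 * n + 1 + 1),
        (((2 * n + 1).choose i : ℝ)) * ((2:ℝ)^(-((2 * n + 1 : ℕ):ℝ) * q) * G ^ (2 * n + 1)) := by
          apply Finset.sum_le_sum
          intro i hi
          rw [Finset.mem_range] at hi
          have hik : i ≤ 2 * n + 1 := by omega
          rw [aux_split c d s hc hd, ← hA_def, ← hB_def, mul_assoc]
          apply mul_le_mul_of_nonneg_left _ (by positivity)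
          apply mul_le_mul_of_nonneg_left _ (le_of_lt (h2kpos n))
          have hml : min i (2 * n + 1 - i) ≤ max i (2 * n + 1 - i) := min_le_max
          have := aux_pow_le A B hA hB hAB.le (max i (2 * n + 1 - i)) (min i (2 * n + 1 - i)) hml
          rwa [max_add_min, Nat.add_sub_cancel' hik, ← hGdef] at this
      _ = (∑ i ∈ Finset.range (2 * n + 1 + 1), (((2 * n + 1).choose i : ℝ))) *
            ((2:ℝ)^(-((2 * n + 1 : ℕ):ℝ) * q) * G ^ (2 * n + 1)) :=
          (Finset.sum_mul _ _ _).symm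
      _ = δ ^ (2 * n + 1) := by
          have hsc : (∑ i ∈ Finset.range (2 * n + 1 + 1), (((2 * n + 1).choose i : ℝ)))
              = (2:ℝ) ^ (2 * n + 1) := by
            rw [← Nat.cast_sum, Nat.sum_range_choose]; push_cast; ring
          rw [hsc, h2k n, hδdef, mul_pow, mul_pow]
          ring
  set E := A / (2 * G) with hEdef
  have hEpos : 0 < E := by positivity
  have hlower : ∀ n : ℕ, δ ^ (2 * n + 1) * (E / ((2 * n + 1 : ℕ) : ℝ)) ≤ Φ n := by
    intro n
    have hkpos : (0:ℝ) < ((2 * n + 1 : ℕ):ℝ) := by positivity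
    have hchoose : (2:ℝ) ^ (2 * n) ≤ ((2 * n + 1 : ℕ):ℝ) * ((2 * n + 1).choose n : ℝ) := by
      have h1 : 4 ^ n ≤ (2 * n + 1) * (2 * n).choose n :=
        Nat.four_pow_le_two_mul_add_one_mul_central_binom n
      have h2 : (2 * n).choose n ≤ (2 * n + 1).choose n := Nat.choose_le_choose n (by omega)
      have h3 : (4:ℕ) ^ n ≤ (2 * n + 1) * (2 * n + 1).choose n :=
        le_trans h1 (Nat.mul_le_mul_left _ h2)
      have h4 : ((4:ℕ):ℝ) ^ n ≤ ((2 * n + 1 : ℕ):ℝ) * ((2 * n + 1).choose n : ℝ) := by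
        exact_mod_cast h3
      calc (2:ℝ) ^ (2 * n) = ((4:ℕ):ℝ) ^ n := by
            push_cast; rw [show ((4:ℝ)) = 2 ^ 2 by norm_num, ← pow_mul]
        _ ≤ _ := h4
    have hterm : δ ^ (2 * n + 1) * (E / ((2 * n + 1 : ℕ):ℝ)) ≤
        (((2 * n + 1).choose n : ℝ)) * (2:ℝ)^(-((2 * n + 1 : ℕ):ℝ) * q) *
          ((c^(max n (2 * n + 1 - n)) * d^(min n (2 * n + 1 - n))) : ℝ)^s := by
      have hmax : max n (2 * n + 1 - n) = n + 1 := by omega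
      have hmin : min n (2 * n + 1 - n) = n := by omega
      rw [hmax, hmin, aux_split c d s hc hd, ← hA_def, ← hB_def]
      have heq1 : δ ^ (2 * n + 1) * (E / ((2 * n + 1 : ℕ):ℝ)) =
          ((2:ℝ) ^ (2 * n) / ((2 * n + 1 : ℕ):ℝ)) *
            ((2:ℝ)^(-((2 * n + 1 : ℕ):ℝ) * q) * (A ^ (n + 1) * B ^ n)) := by
        rw [hδdef, h2k n, hEdef, mul_pow, mul_pow]
        have hGk : G ^ (2 * n + 1) = (A * B) ^ n * G := by
          rw [pow_succ, pow_mul, hG2]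
        rw [hGk]
        field_simp
        ring
      rw [heq1]
      have h2 : (2:ℝ) ^ (2 * n) / ((2 * n + 1 : ℕ):ℝ) ≤ (((2 * n + 1).choose n : ℝ)) := by
        rw [div_le_iff₀ hkpos]
        linarith [hchoose]
      calc ((2:ℝ) ^ (2 * n) / ((2 * n + 1 : ℕ):ℝ)) *
            ((2:ℝ)^(-((2 * n + 1 : ℕ):ℝ) * q) * (A ^ (n + 1) * B ^ n))
          ≤ (((2 * n + 1).choose n : ℝ)) *
            ((2:ℝ)^(-((2 * n + 1 : ℕ):ℝ) * q) * (A ^ (n + 1) * B ^ n)) :=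
            mul_le_mul_of_nonneg_right h2 (by positivity)
        _ = (((2 * n + 1).choose n : ℝ)) * (2:ℝ)^(-((2 * n + 1 : ℕ):ℝ) * q) *
            (A ^ (n + 1) * B ^ n) := by ring
    calc δ ^ (2 * n + 1) * (E / ((2 * n + 1 : ℕ):ℝ)) ≤ _ := hterm
      _ ≤ Φ n := by
        apply Finset.single_le_sum (f := fun i =>
          (((2 * n + 1).choose i : ℝ)) * (2:ℝ)^(-((2 * n + 1 : ℕ):ℝ) * q) *
            ((c^(max i (2 * n + 1 - i)) * d^(min i (2 * n + 1 - i))) : ℝ)^s)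
          (fun i hi => by positivity) (Finset.mem_range.2 (by omega))
  have hΦpos : ∀ n : ℕ, 0 < Φ n := fun n =>
    lt_of_lt_of_le (by positivity) (hlower n)
  set K : ℕ → ℝ := fun n => ((2 * n + 1 : ℕ) : ℝ) with hKdef
  have hKpos : ∀ n, (0:ℝ) < K n := fun n => by positivity
  set u : ℕ → ℝ := fun n => Real.log (Φ n) / K n with hudef
  have hrw : ∀ n, Φ n ^ ((1:ℝ) / K n) = Real.exp (u n) := by
    intro n
    rw [Real.rpow_def_of_pos (hΦpos n), mul_one_div]
  have hu_le : ∀ n, u n ≤ Real.log δ := by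
    intro n
    have h1 : Real.log (Φ n) ≤ K n * Real.log δ := by
      have := Real.log_le_log (hΦpos n) (hupper n)
      rwa [Real.log_pow] at this
    show Real.log (Φ n) / K n ≤ Real.log δ
    rw [div_le_iff₀ (hKpos n), mul_comm (Real.log δ) (K n)]
    exact h1
  have hu_ge : ∀ n, Real.log δ + (Real.log E - Real.log (K n)) / K n ≤ u n := by
    intro n
    have hkpos : (0:ℝ) < ((2 * n + 1 : ℕ):ℝ) := by positivity
    have h1 : ((2 * n + 1 : ℕ):ℝ) * Real.log δ +
        (Real.log E - Real.log ((2 * n + 1 : ℕ):ℝ)) ≤ Real.log (Φ n) := by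
      have hlog := Real.log_le_log
        (mul_pos (pow_pos hδpos (2 * n + 1)) (div_pos hEpos hkpos)) (hlower n)
      rwa [Real.log_mul (by positivity) (by positivity), Real.log_pow,
        Real.log_div (ne_of_gt hEpos) (ne_of_gt hkpos)] at hlog
    show Real.log δ + (Real.log E - Real.log ((2 * n + 1 : ℕ):ℝ)) / ((2 * n + 1 : ℕ):ℝ) ≤
      Real.log (Φ n) / ((2 * n + 1 : ℕ):ℝ)
    rw [le_div_iff₀ hkpos, add_mul, div_mul_cancel₀ _ (ne_of_gt hkpos),
      mul_comm (Real.log δ) (((2 * n + 1 : ℕ):ℝ))]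
    exact h1
  have hK_atTop : Tendsto K atTop atTop := by
    apply tendsto_natCast_atTop_atTop.comp
    exact tendsto_atTop_mono (fun n => (by omega : n ≤ 2 * n + 1)) tendsto_id
  have hlim0 : Tendsto (fun n => (Real.log E - Real.log (K n)) / K n) atTop (nhds 0) := by
    have h1 : Tendsto (fun n => Real.log E / K n) atTop (nhds 0) :=
      Tendsto.div_atTop tendsto_const_nhds hK_atTop
    have h2 : Tendsto (fun n => Real.log (K n) / K n) atTop (nhds 0) :=
      (Real.isLittleO_log_id_atTop.tendsto_div_nhds_zero).comp hK_atTop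
    have h3 := h1.sub h2
    simpa [sub_div] using h3
  have hlim1 : Tendsto (fun n => Real.log δ + (Real.log E - Real.log (K n)) / K n)
      atTop (nhds (Real.log δ)) := by
    simpa using tendsto_const_nhds.add hlim0
  have hu_lim : Tendsto u atTop (nhds (Real.log δ)) :=
    tendsto_of_tendsto_of_tendsto_of_le_of_le hlim1 tendsto_const_nhds hu_ge hu_le
  have hfinal : Tendsto (fun n => Real.exp (u n)) atTop (nhds δ) := by
    have h5 := (Real.continuous_exp.tendsto (Real.log δ)).comp hu_lim
    rwa [Real.exp_log hδpos] at h5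
  exact hfinal.congr (fun n => (hrw n).symm)
end

section
/- Let 0 < d < c < 1 with c + d ≤ 1 and q > 1, and let u > 0 satisfy 2^{-q} c^{u(1-q)} + 2^{-q} d^{u(1-q)} = 1. Then for every odd positive integer k, sum_{i=0}^{k} binom(k,i) (c^{max(i,k-i)} d^{min(i,k-i)})^{u(1-q)} 2^{-kq} equals X_k + Y_k where X_k = sum_{i=0}^{floor(k/2)} binom(k,i)(c^{k-i}d^i)^{u(1-q)}2^{-kq} and Y_k = sum_{i=ceil(k/2)}^{k} binom(k,i)(d^{k-i}c^i)^{u(1-q)}2^{-kq}, and (X_k + Y_k)^{1/k} → 2(c/d)^{u(q-1)/2}/((c/d)^{u(q-1)} + 1) < 1 as k → ∞ along odd integers. -/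
open Filter Real


lemma miao_aux_tendsto (C0 C1 C2 : ℝ) :
    Tendsto (fun n : ℕ => (C0 + C1 * (n:ℝ) + C2 * Real.log ((n:ℝ)+1)) / (2*(n:ℝ)+1))
      atTop (nhds (C1/2)) := by
  have h1 : Tendsto (fun n : ℕ => 2*(n:ℝ)+1) atTop atTop := by
    apply Filter.tendsto_atTop_add_const_right
    exact Tendsto.const_mul_atTop two_pos tendsto_natCast_atTop_atTop
  have hinv : Tendsto (fun n : ℕ => (2*(n:ℝ)+1)⁻¹) atTop (nhds 0) :=
    tendsto_inv_atTop_zero.comp h1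
  have hA : Tendsto (fun n : ℕ => C0/(2*(n:ℝ)+1)) atTop (nhds 0) := by
    simpa [div_eq_mul_inv] using hinv.const_mul C0
  have hhalf : Tendsto (fun n : ℕ => (n:ℝ)/(2*(n:ℝ)+1)) atTop (nhds (1/2)) := by
    have heqf : ∀ n : ℕ, (n:ℝ)/(2*(n:ℝ)+1) = 1/2 - (1/2)*(2*(n:ℝ)+1)⁻¹ := by
      intro n
      have h : (2*(n:ℝ)+1) ≠ 0 := by positivity
      field_simp
      ring
    simp only [heqf]
    have h2 : Tendsto (fun _ : ℕ => (1:ℝ)/2) atTop (nhds (1/2)) := tendsto_const_nhds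
    have h3 := h2.sub (hinv.const_mul (1/2))
    norm_num at h3 ⊢
    exact h3
  have hlogx : Tendsto (fun x : ℝ => Real.log x / x) atTop (nhds 0) := by
    simpa [Function.comp] using Real.isLittleO_log_id_atTop.tendsto_div_nhds_zero
  have hlog2 : Tendsto (fun n : ℕ => Real.log (2*(n:ℝ)+1) / (2*(n:ℝ)+1)) atTop (nhds 0) :=
    hlogx.comp h1
  have hlogpart : Tendsto (fun n : ℕ => Real.log ((n:ℝ)+1) / (2*(n:ℝ)+1)) atTop (nhds 0) := by
    apply tendsto_of_tendsto_of_tendsto_of_le_of_le tendsto_const_nhds hlog2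
    · intro n
      exact div_nonneg (Real.log_nonneg (by norm_num)) (by positivity)
    · intro n
      have hle : Real.log ((n:ℝ)+1) ≤ Real.log (2*(n:ℝ)+1) :=
        Real.log_le_log (by positivity) (by nlinarith [Nat.cast_nonneg (α := ℝ) n])
      exact div_le_div_of_nonneg_right hle (by positivity) |>.trans_eq rfl
  have heqf2 : ∀ n : ℕ, (C0 + C1 * (n:ℝ) + C2 * Real.log ((n:ℝ)+1)) / (2*(n:ℝ)+1)
      = C0/(2*(n:ℝ)+1) + (C1 * ((n:ℝ)/(2*(n:ℝ)+1)) + C2 * (Real.log ((n:ℝ)+1)/(2*(n:ℝ)+1))) := by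
    intro n; ring
  simp only [heqf2]
  have := hA.add ((hhalf.const_mul C1).add (hlogpart.const_mul C2))
  simpa [div_eq_mul_inv] using this


lemma miao_choose_lb (n : ℕ) : 4^n ≤ (n+1) * (2*n+1).choose n := by
  have h1 : (2:ℕ)^(2*n+1) ≤ (2*n+2) * (2*n+1).choose n := by
    calc (2:ℕ)^(2*n+1) = ∑ i ∈ Finset.range (2*n+1+1), (2*n+1).choose i :=
          (Nat.sum_range_choose (2*n+1)).symm
      _ ≤ (2*n+1+1) * (2*n+1).choose n := by
          have h := Finset.sum_le_card_nsmul (Finset.range (2*n+1+1))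
            (fun i => (2*n+1).choose i) ((2*n+1).choose n)
            (fun i _ => by
              simpa [show (2*n+1)/2 = n by omega] using Nat.choose_le_middle i (2*n+1))
          simpa [Finset.card_range, smul_eq_mul] using h
      _ = (2*n+2) * (2*n+1).choose n := by ring_nf
  have h2 : (2:ℕ)^(2*n+1) = 2 * 4^n := by
    rw [pow_succ, pow_mul]; ring_nf
  rw [h2] at h1
  have h3 : (2*n+2) * (2*n+1).choose n = 2 * ((n+1) * (2*n+1).choose n) := by ring
  rw [h3] at h1
  exact Nat.le_of_mul_le_mul_left h1 (by norm_num)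


lemma miao_part2 (X Y q : ℝ) (hX0 : 0 < X) (hY0 : 0 < Y) (hXY : X ≤ Y)
    (S : ℕ → ℝ)
    (hSlb : ∀ n : ℕ, ((2*n+1).choose n : ℝ) * (X^(n+1)*Y^n) ≤ S n)
    (hSub : ∀ n : ℕ, S n ≤ ((n:ℝ)+1) * (((2*n+1).choose n : ℝ) * (X^(n+1)*Y^n))) :
    Tendsto (fun n : ℕ => (2 * (2:ℝ)^(-((2*n+1:ℕ):ℝ)*q) * S n) ^ ((1:ℝ)/((2*n+1:ℕ):ℝ)))
      atTop (nhds (2 * Real.sqrt (X*Y) / (2:ℝ)^q)) := by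
  have hW : ∀ n : ℕ, ((2*n+1:ℕ):ℝ) = 2*(n:ℝ)+1 := by intro n; push_cast; ring
  have hfun : (fun n : ℕ => (2 * (2:ℝ)^(-((2*n+1:ℕ):ℝ)*q) * S n) ^ ((1:ℝ)/((2*n+1:ℕ):ℝ)))
      = fun n : ℕ => (2 * (2:ℝ)^(-(2*(n:ℝ)+1)*q) * S n) ^ ((1:ℝ)/(2*(n:ℝ)+1)) := by
    funext n; rw [hW]
  rw [hfun]
  have h2q0 : (0:ℝ) < (2:ℝ)^q := Real.rpow_pos_of_pos two_pos q
  have hT0 : 0 < 2 * Real.sqrt (X*Y) / (2:ℝ)^q := by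
    apply div_pos _ h2q0
    have h := Real.sqrt_pos.mpr (mul_pos hX0 hY0)
    linarith
  have hlogT : Real.log (2 * Real.sqrt (X*Y) / (2:ℝ)^q)
      = (2*Real.log 2 - 2*q*Real.log 2 + Real.log X + Real.log Y)/2 := by
    rw [Real.log_div (by positivity) (ne_of_gt h2q0),
      Real.log_mul (by norm_num) (ne_of_gt (Real.sqrt_pos.mpr (mul_pos hX0 hY0))),
      Real.log_sqrt (mul_pos hX0 hY0).le,
      Real.log_mul (ne_of_gt hX0) (ne_of_gt hY0), Real.log_rpow two_pos]
    ring
  have hexpT : Real.exp ((2*Real.log 2 - 2*q*Real.log 2 + Real.log X + Real.log Y)/2)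
      = 2 * Real.sqrt (X*Y) / (2:ℝ)^q := by
    rw [← hlogT, Real.exp_log hT0]
  have hexp : ∀ C0 C2 : ℝ, Tendsto (fun n : ℕ =>
      Real.exp ((C0 + (2*Real.log 2 - 2*q*Real.log 2 + Real.log X + Real.log Y)*(n:ℝ)
        + C2*Real.log ((n:ℝ)+1))/(2*(n:ℝ)+1))) atTop (nhds (2 * Real.sqrt (X*Y) / (2:ℝ)^q)) := by
    intro C0 C2
    have h := miao_aux_tendsto C0 (2*Real.log 2 - 2*q*Real.log 2 + Real.log X + Real.log Y) C2
    have h2 := (Real.continuous_exp.tendsto _).comp h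
    rw [hexpT] at h2
    exact h2
  have hWpos : ∀ n : ℕ, (0:ℝ) < (2:ℝ)^(-(2*(n:ℝ)+1)*q) :=
    fun n => Real.rpow_pos_of_pos two_pos _
  have hSpos : ∀ n : ℕ, 0 < S n := by
    intro n
    refine lt_of_lt_of_le (mul_pos ?_ (by positivity)) (hSlb n)
    exact_mod_cast Nat.choose_pos (by omega : n ≤ 2*n+1)
  have hchoose_ub : ∀ n : ℕ, (((2*n+1).choose n : ℕ) : ℝ) ≤ (4:ℝ)^n := by
    intro n; exact_mod_cast Nat.choose_middle_le_pow n
  have hchoose_lb : ∀ n : ℕ, (4:ℝ)^n / ((n:ℝ)+1) ≤ (((2*n+1).choose n : ℕ) : ℝ) := by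
    intro n
    rw [div_le_iff₀ (by positivity)]
    have h : 4^n ≤ (n+1) * (2*n+1).choose n := miao_choose_lb n
    have h' : ((4^n : ℕ) : ℝ) ≤ (((n+1) * (2*n+1).choose n : ℕ) : ℝ) := Nat.cast_le.mpr h
    push_cast at h'
    linarith
  -- lower and upper bounds
  have hLo_le : ∀ n : ℕ, 2 * (2:ℝ)^(-(2*(n:ℝ)+1)*q) * ((4:ℝ)^n/((n:ℝ)+1) * (X^(n+1)*Y^n))
      ≤ 2 * (2:ℝ)^(-(2*(n:ℝ)+1)*q) * S n := by
    intro n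
    have h1 : (4:ℝ)^n/((n:ℝ)+1) * (X^(n+1)*Y^n) ≤ ((2*n+1).choose n : ℝ) * (X^(n+1)*Y^n) :=
      mul_le_mul_of_nonneg_right (hchoose_lb n) (by positivity)
    exact mul_le_mul_of_nonneg_left (h1.trans (hSlb n)) (by positivity)
  have hUp_le : ∀ n : ℕ, 2 * (2:ℝ)^(-(2*(n:ℝ)+1)*q) * S n
      ≤ 2 * (2:ℝ)^(-(2*(n:ℝ)+1)*q) * (((n:ℝ)+1) * ((4:ℝ)^n * (X^(n+1)*Y^n))) := by
    intro n
    have h1 : ((2*n+1).choose n : ℝ) * (X^(n+1)*Y^n) ≤ (4:ℝ)^n * (X^(n+1)*Y^n) :=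
      mul_le_mul_of_nonneg_right (hchoose_ub n) (by positivity)
    have h2 : S n ≤ ((n:ℝ)+1) * ((4:ℝ)^n * (X^(n+1)*Y^n)) :=
      (hSub n).trans (mul_le_mul_of_nonneg_left h1 (by positivity))
    exact mul_le_mul_of_nonneg_left h2 (by positivity)
  have hLopos : ∀ n : ℕ, (0:ℝ) < 2 * (2:ℝ)^(-(2*(n:ℝ)+1)*q) * ((4:ℝ)^n/((n:ℝ)+1) * (X^(n+1)*Y^n)) := by
    intro n; positivity
  have hUppos : ∀ n : ℕ, (0:ℝ) < 2 * (2:ℝ)^(-(2*(n:ℝ)+1)*q) * (((n:ℝ)+1) * ((4:ℝ)^n * (X^(n+1)*Y^n))) := by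
    intro n; positivity
  -- log identities
  have hlog4 : Real.log 4 = 2 * Real.log 2 := by
    rw [show (4:ℝ) = 2^2 by norm_num, Real.log_pow]; push_cast; ring
  have hlogLo : ∀ n : ℕ, Real.log (2 * (2:ℝ)^(-(2*(n:ℝ)+1)*q) * ((4:ℝ)^n/((n:ℝ)+1) * (X^(n+1)*Y^n)))
      = (Real.log 2 - q*Real.log 2 + Real.log X)
        + (2*Real.log 2 - 2*q*Real.log 2 + Real.log X + Real.log Y)*(n:ℝ)
        + (-1)*Real.log ((n:ℝ)+1) := by
    intro n
    rw [Real.log_mul (by positivity) (by positivity),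
      Real.log_mul (by positivity) (ne_of_gt (hWpos n)),
      Real.log_mul (by positivity) (by positivity),
      Real.log_div (by positivity) (by positivity),
      Real.log_mul (by positivity) (by positivity),
      Real.log_pow, Real.log_pow, Real.log_pow,
      Real.log_rpow two_pos, hlog4]
    push_cast
    ring
  have hlogUp : ∀ n : ℕ, Real.log (2 * (2:ℝ)^(-(2*(n:ℝ)+1)*q) * (((n:ℝ)+1) * ((4:ℝ)^n * (X^(n+1)*Y^n))))
      = (Real.log 2 - q*Real.log 2 + Real.log X)
        + (2*Real.log 2 - 2*q*Real.log 2 + Real.log X + Real.log Y)*(n:ℝ)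
        + (1:ℝ)*Real.log ((n:ℝ)+1) := by
    intro n
    rw [Real.log_mul (by positivity) (by positivity),
      Real.log_mul (by positivity) (ne_of_gt (hWpos n)),
      Real.log_mul (by positivity) (by positivity),
      Real.log_mul (by positivity) (by positivity),
      Real.log_mul (by positivity) (by positivity),
      Real.log_pow, Real.log_pow, Real.log_pow,
      Real.log_rpow two_pos, hlog4]
    push_cast
    ring
  have hLoT : Tendsto (fun n : ℕ =>
      (2 * (2:ℝ)^(-(2*(n:ℝ)+1)*q) * ((4:ℝ)^n/((n:ℝ)+1) * (X^(n+1)*Y^n))) ^ ((1:ℝ)/(2*(n:ℝ)+1)))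
      atTop (nhds (2 * Real.sqrt (X*Y) / (2:ℝ)^q)) := by
    have heq : (fun n : ℕ =>
        (2 * (2:ℝ)^(-(2*(n:ℝ)+1)*q) * ((4:ℝ)^n/((n:ℝ)+1) * (X^(n+1)*Y^n))) ^ ((1:ℝ)/(2*(n:ℝ)+1)))
        = fun n : ℕ => Real.exp (((Real.log 2 - q*Real.log 2 + Real.log X)
          + (2*Real.log 2 - 2*q*Real.log 2 + Real.log X + Real.log Y)*(n:ℝ)
          + (-1)*Real.log ((n:ℝ)+1))/(2*(n:ℝ)+1)) := by
      funext n
      rw [Real.rpow_def_of_pos (hLopos n), hlogLo n, mul_one_div]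
    rw [heq]
    exact hexp _ _
  have hUpT : Tendsto (fun n : ℕ =>
      (2 * (2:ℝ)^(-(2*(n:ℝ)+1)*q) * (((n:ℝ)+1) * ((4:ℝ)^n * (X^(n+1)*Y^n)))) ^ ((1:ℝ)/(2*(n:ℝ)+1)))
      atTop (nhds (2 * Real.sqrt (X*Y) / (2:ℝ)^q)) := by
    have heq : (fun n : ℕ =>
        (2 * (2:ℝ)^(-(2*(n:ℝ)+1)*q) * (((n:ℝ)+1) * ((4:ℝ)^n * (X^(n+1)*Y^n)))) ^ ((1:ℝ)/(2*(n:ℝ)+1)))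
        = fun n : ℕ => Real.exp (((Real.log 2 - q*Real.log 2 + Real.log X)
          + (2*Real.log 2 - 2*q*Real.log 2 + Real.log X + Real.log Y)*(n:ℝ)
          + (1:ℝ)*Real.log ((n:ℝ)+1))/(2*(n:ℝ)+1)) := by
      funext n
      rw [Real.rpow_def_of_pos (hUppos n), hlogUp n, mul_one_div]
    rw [heq]
    exact hexp _ _
  apply tendsto_of_tendsto_of_tendsto_of_le_of_le hLoT hUpT
  · intro n
    exact Real.rpow_le_rpow (hLopos n).le (hLo_le n) (by positivity)
  · intro n
    exact Real.rpow_le_rpow (mul_pos (mul_pos two_pos (hWpos n)) (hSpos n)).le (hUp_le n)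
      (by positivity)

theorem miao_counterexample_sum (c d q u : ℝ) (hd : 0 < d) (hdc : d < c) (hc : c < 1)
    (hcd : c + d ≤ 1) (hq : 1 < q) (hu : 0 < u)
    (heq : (2:ℝ)^(-q) * c^(u * (1 - q)) + (2:ℝ)^(-q) * d^(u * (1 - q)) = 1) :
    (∀ k : ℕ, Odd k → 0 < k →
      ∑ i ∈ Finset.range (k + 1),
          (k.choose i : ℝ) * ((c^(max i (k - i)) * d^(min i (k - i))) : ℝ)^(u * (1 - q)) *
            (2:ℝ)^(-(k : ℝ) * q) =
        (∑ i ∈ Finset.range (k / 2 + 1),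
            (k.choose i : ℝ) * ((c^(k - i) * d^i) : ℝ)^(u * (1 - q)) * (2:ℝ)^(-(k : ℝ) * q)) +
        (∑ i ∈ Finset.Icc ((k + 1) / 2) k,
            (k.choose i : ℝ) * ((d^(k - i) * c^i) : ℝ)^(u * (1 - q)) * (2:ℝ)^(-(k : ℝ) * q))) ∧
    Filter.Tendsto
      (fun n : ℕ =>
        ((∑ i ∈ Finset.range ((2 * n + 1) / 2 + 1),
            ((2 * n + 1).choose i : ℝ) * ((c^(2 * n + 1 - i) * d^i) : ℝ)^(u * (1 - q)) *
              (2:ℝ)^(-((2 * n + 1 : ℕ) : ℝ) * q)) +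
         (∑ i ∈ Finset.Icc ((2 * n + 1 + 1) / 2) (2 * n + 1),
            ((2 * n + 1).choose i : ℝ) * ((d^(2 * n + 1 - i) * c^i) : ℝ)^(u * (1 - q)) *
              (2:ℝ)^(-((2 * n + 1 : ℕ) : ℝ) * q)))
          ^ ((1 : ℝ) / ((2 * n + 1 : ℕ) : ℝ)))
      Filter.atTop (nhds (2 * (c / d)^(u * (q - 1) / 2) / ((c / d)^(u * (q - 1)) + 1))) ∧
    2 * (c / d)^(u * (q - 1) / 2) / ((c / d)^(u * (q - 1)) + 1) < 1 := by
  have hc0 : 0 < c := hd.trans hdc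
  have he : u * (1 - q) < 0 := mul_neg_of_pos_of_neg hu (by linarith)
  have hX0 : 0 < c ^ (u * (1 - q)) := Real.rpow_pos_of_pos hc0 _
  have hY0 : 0 < d ^ (u * (1 - q)) := Real.rpow_pos_of_pos hd _
  have hXY : c ^ (u * (1 - q)) < d ^ (u * (1 - q)) := Real.rpow_lt_rpow_of_neg hd hdc he
  have h2q0 : (0:ℝ) < (2:ℝ)^q := Real.rpow_pos_of_pos two_pos q
  have h2 : (2:ℝ)^(-q) * (2:ℝ)^q = 1 := by
    rw [← Real.rpow_add two_pos]; simp
  have hsum : c ^ (u * (1 - q)) + d ^ (u * (1 - q)) = (2:ℝ)^q := by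
    linear_combination (2:ℝ)^q * heq - (c ^ (u * (1 - q)) + d ^ (u * (1 - q))) * h2
  have hpow : ∀ x : ℝ, 0 < x → ∀ m : ℕ, ((x^m : ℝ))^(u * (1 - q)) = (x^(u * (1 - q)))^m := by
    intro x hx m
    rw [← Real.rpow_natCast x m, ← Real.rpow_natCast (x^(u * (1 - q))) m,
      ← Real.rpow_mul hx.le, ← Real.rpow_mul hx.le, mul_comm]
  have hterm : ∀ m i : ℕ, ((c^m * d^i : ℝ))^(u * (1 - q))
      = (c^(u * (1 - q)))^m * (d^(u * (1 - q)))^i := by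
    intro m i
    rw [Real.mul_rpow (by positivity) (by positivity), hpow c hc0, hpow d hd]
  refine ⟨?_, ?_, ?_⟩
  · -- Part 1
    intro k hk hk0
    obtain ⟨n, rfl⟩ : ∃ n, k = 2*n+1 := by
      obtain ⟨m, hm⟩ := hk; exact ⟨m, by omega⟩
    have hi1 : (2*n+1)/2 + 1 = n+1 := by omega
    have hi2 : (2*n+1+1)/2 = n+1 := by omega
    rw [hi1, hi2, Finset.range_eq_Ico,
      ← Finset.sum_Ico_consecutive _ (Nat.zero_le (n+1)) (by omega : n+1 ≤ 2*n+1+1)]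
    congr 1
    · rw [← Finset.range_eq_Ico]
      apply Finset.sum_congr rfl
      intro i hi
      rw [Finset.mem_range] at hi
      rw [max_eq_right (by omega : i ≤ 2*n+1-i), min_eq_left (by omega : i ≤ 2*n+1-i)]
    · rw [Finset.Ico_add_one_right_eq_Icc]
      apply Finset.sum_congr rfl
      intro i hi
      rw [Finset.mem_Icc] at hi
      rw [max_eq_left (by omega : 2*n+1-i ≤ i), min_eq_right (by omega : 2*n+1-i ≤ i),
        mul_comm (c^i) (d^(2*n+1-i))]
  · -- Part 2
    have hrinv : (c/d)^(u*(q-1)) = d^(u*(1-q)) / c^(u*(1-q)) := by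
      rw [show u*(q-1) = -(u*(1-q)) by ring, Real.rpow_neg (by positivity : (0:ℝ) ≤ c/d),
        Real.div_rpow hc0.le hd.le, inv_div]
    have hshalf : (c/d)^(u*(q-1)/2) = Real.sqrt (d^(u*(1-q)) / c^(u*(1-q))) := by
      rw [Real.sqrt_eq_rpow, ← hrinv, show u*(q-1)/2 = u*(q-1)*(1/2) by ring,
        Real.rpow_mul (by positivity : (0:ℝ) ≤ c/d)]
    have hsq1 : Real.sqrt (d^(u*(1-q)) / c^(u*(1-q)))
        = Real.sqrt (c^(u*(1-q)) * d^(u*(1-q))) / c^(u*(1-q)) := by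
      rw [show d^(u*(1-q)) / c^(u*(1-q)) = (c^(u*(1-q)) * d^(u*(1-q))) / (c^(u*(1-q)))^2 by
        field_simp,
        Real.sqrt_div' _ (sq_nonneg _), Real.sqrt_sq hX0.le]
    have hT : 2 * (c/d)^(u*(q-1)/2) / ((c/d)^(u*(q-1)) + 1)
        = 2 * Real.sqrt (c^(u*(1-q)) * d^(u*(1-q))) / (2:ℝ)^q := by
      rw [hshalf, hrinv, hsq1, ← hsum]
      have hXne : c^(u*(1-q)) ≠ 0 := ne_of_gt hX0
      have hsumne : c^(u*(1-q)) + d^(u*(1-q)) ≠ 0 := by positivity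
      have hdenne : d^(u*(1-q)) / c^(u*(1-q)) + 1 ≠ 0 := by positivity
      field_simp
      ring
    rw [hT]
    have hSlb : ∀ n : ℕ, ((2*n+1).choose n : ℝ) * ((c^(u*(1-q)))^(n+1) * (d^(u*(1-q)))^n)
        ≤ ∑ i ∈ Finset.range (n+1),
            ((2*n+1).choose i : ℝ) * ((c^(u*(1-q)))^(2*n+1-i) * (d^(u*(1-q)))^i) := by
      intro n
      have h := Finset.single_le_sum
        (f := fun i => ((2*n+1).choose i : ℝ) * ((c^(u*(1-q)))^(2*n+1-i) * (d^(u*(1-q)))^i))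
        (fun i _ => by positivity) (Finset.self_mem_range_succ n)
      simpa [show 2*n+1-n = n+1 by omega] using h
    have hSub : ∀ n : ℕ, (∑ i ∈ Finset.range (n+1),
          ((2*n+1).choose i : ℝ) * ((c^(u*(1-q)))^(2*n+1-i) * (d^(u*(1-q)))^i))
        ≤ ((n:ℝ)+1) * (((2*n+1).choose n : ℝ) * ((c^(u*(1-q)))^(n+1) * (d^(u*(1-q)))^n)) := by
      intro n
      have hb : ∀ i ∈ Finset.range (n+1),
          ((2*n+1).choose i : ℝ) * ((c^(u*(1-q)))^(2*n+1-i) * (d^(u*(1-q)))^i)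
          ≤ ((2*n+1).choose n : ℝ) * ((c^(u*(1-q)))^(n+1) * (d^(u*(1-q)))^n) := by
        intro i hi
        rw [Finset.mem_range] at hi
        have h1 : ((2*n+1).choose i : ℝ) ≤ ((2*n+1).choose n : ℝ) := by
          have := Nat.choose_le_middle i (2*n+1)
          rw [show (2*n+1)/2 = n by omega] at this
          exact_mod_cast this
        have e1 : (c^(u*(1-q)))^(2*n+1-i) = (c^(u*(1-q)))^(n+1) * (c^(u*(1-q)))^(n-i) := by
          rw [← pow_add]; congr 1; omega
        have e2 : (d^(u*(1-q)))^n = (d^(u*(1-q)))^(n-i) * (d^(u*(1-q)))^i := by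
          rw [← pow_add]; congr 1; omega
        have h3 : (c^(u*(1-q)))^(n-i) ≤ (d^(u*(1-q)))^(n-i) :=
          pow_le_pow_left₀ hX0.le hXY.le _
        have h2 : (c^(u*(1-q)))^(2*n+1-i) * (d^(u*(1-q)))^i
            ≤ (c^(u*(1-q)))^(n+1) * (d^(u*(1-q)))^n := by
          rw [e1, e2]
          calc (c^(u*(1-q)))^(n+1) * (c^(u*(1-q)))^(n-i) * (d^(u*(1-q)))^i
              ≤ (c^(u*(1-q)))^(n+1) * (d^(u*(1-q)))^(n-i) * (d^(u*(1-q)))^i := by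
                have h4 := mul_le_mul_of_nonneg_right
                  (mul_le_mul_of_nonneg_left h3 (pow_pos hX0 (n+1)).le)
                  (pow_nonneg hY0.le i)
                linarith
            _ = (c^(u*(1-q)))^(n+1) * ((d^(u*(1-q)))^(n-i) * (d^(u*(1-q)))^i) := by ring
        exact mul_le_mul h1 h2 (by positivity) (by positivity)
      have h := Finset.sum_le_card_nsmul (Finset.range (n+1)) _ _ hb
      rw [Finset.card_range, nsmul_eq_mul] at h
      push_cast at h
      linarith
    have hGsum : ∀ n : ℕ,
        ((∑ i ∈ Finset.range ((2 * n + 1) / 2 + 1),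
            ((2 * n + 1).choose i : ℝ) * ((c^(2 * n + 1 - i) * d^i) : ℝ)^(u * (1 - q)) *
              (2:ℝ)^(-((2 * n + 1 : ℕ) : ℝ) * q)) +
         (∑ i ∈ Finset.Icc ((2 * n + 1 + 1) / 2) (2 * n + 1),
            ((2 * n + 1).choose i : ℝ) * ((d^(2 * n + 1 - i) * c^i) : ℝ)^(u * (1 - q)) *
              (2:ℝ)^(-((2 * n + 1 : ℕ) : ℝ) * q)))
        = 2 * (2:ℝ)^(-((2*n+1 : ℕ) : ℝ) * q) *
          ∑ i ∈ Finset.range (n+1),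
            ((2*n+1).choose i : ℝ) * ((c^(u*(1-q)))^(2*n+1-i) * (d^(u*(1-q)))^i) := by
      intro n
      have hi1 : (2*n+1)/2 + 1 = n+1 := by omega
      have hi2 : (2*n+1+1)/2 = n+1 := by omega
      rw [hi1, hi2]
      have e1 : (∑ i ∈ Finset.range (n+1),
            ((2*n+1).choose i : ℝ) * ((c^(2*n+1-i) * d^i) : ℝ)^(u*(1-q)) *
              (2:ℝ)^(-((2*n+1:ℕ):ℝ)*q))
          = (2:ℝ)^(-((2*n+1:ℕ):ℝ)*q) * ∑ i ∈ Finset.range (n+1),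
              ((2*n+1).choose i : ℝ) * ((c^(u*(1-q)))^(2*n+1-i) * (d^(u*(1-q)))^i) := by
        rw [Finset.mul_sum]
        apply Finset.sum_congr rfl
        intro i hi
        rw [hterm]
        ring
      have e2 : (∑ i ∈ Finset.Icc (n+1) (2*n+1),
            ((2*n+1).choose i : ℝ) * ((d^(2*n+1-i) * c^i) : ℝ)^(u*(1-q)) *
              (2:ℝ)^(-((2*n+1:ℕ):ℝ)*q))
          = (2:ℝ)^(-((2*n+1:ℕ):ℝ)*q) * ∑ i ∈ Finset.range (n+1),
              ((2*n+1).choose i : ℝ) * ((c^(u*(1-q)))^(2*n+1-i) * (d^(u*(1-q)))^i) := by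
        rw [Finset.mul_sum]
        apply Finset.sum_nbij' (i := fun i => 2*n+1-i) (j := fun j => 2*n+1-j)
        · intro i hi; rw [Finset.mem_Icc] at hi; rw [Finset.mem_range]; omega
        · intro j hj; rw [Finset.mem_range] at hj; rw [Finset.mem_Icc]; omega
        · intro i hi; rw [Finset.mem_Icc] at hi; omega
        · intro j hj; rw [Finset.mem_range] at hj; omega
        · intro i hi
          rw [Finset.mem_Icc] at hi
          rw [mul_comm (d^(2*n+1-i)) (c^i), hterm, Nat.choose_symm (by omega : i ≤ 2*n+1),
            show 2*n+1-(2*n+1-i) = i by omega]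
          ring
      rw [e1, e2]
      ring
    exact (miao_part2 (c^(u*(1-q))) (d^(u*(1-q))) q hX0 hY0 hXY.le
      (fun n => ∑ i ∈ Finset.range (n+1),
        ((2*n+1).choose i : ℝ) * ((c^(u*(1-q)))^(2*n+1-i) * (d^(u*(1-q)))^i))
      hSlb hSub).congr (fun n => by rw [hGsum n])
  · -- Part 3
    have hcd0 : (0:ℝ) < c/d := div_pos hc0 hd
    have hcd1 : (1:ℝ) < c/d := (one_lt_div hd).mpr hdc
    have hs : (1:ℝ) < (c/d)^(u*(q-1)/2) := by
      rw [show u*(q-1)/2 = u*(q-1)*(1/2) by ring]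
      apply Real.one_lt_rpow_iff_of_pos hcd0 |>.mpr
      left
      constructor
      · exact hcd1
      · nlinarith
    have hsq : ((c/d)^(u*(q-1)/2))^2 = (c/d)^(u*(q-1)) := by
      rw [pow_two, ← Real.rpow_add hcd0]; ring_nf
    rw [div_lt_one (by nlinarith [Real.rpow_pos_of_pos hcd0 (u*(q-1))])]
    nlinarith [mul_pos (sub_pos.mpr hs) (sub_pos.mpr hs)]
end
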